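/- arXiv:math/9910056 — 10 statements merged into one kernel-verified Lean document; each statement's English description precedes it below -/
import Mathlib

section
/- The polynomial X^n + X + 1 over the field with two elements has no repeated irreducible factors, for every integer n ≥ 2. -/
open Polynomial

theorem stmt_0 (n : ℕ) (hn : 2 ≤ n) :
    Squarefree (X ^ n + X + 1 : (ZMod 2)[X]) := by
  have hsep : (X ^ n + X + 1 : (ZMod 2)[X]).Separable := by
    rw [Polynomial.Separable]
    have hd : derivative (X ^ n + X + 1 : (ZMod 2)[X])
        = C (n : ZMod 2) * X ^ (n - 1) + 1 := by
      simp [derivative_X_pow]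
    rw [hd]
    have hx : (X : (ZMod 2)[X]) * X ^ (n - 1) = X ^ n := by
      rw [← pow_succ']
      congr 1
      omega
    rcases Nat.even_or_odd n with he | ho
    · have h0 : ((n : ℕ) : ZMod 2) = 0 := by
        obtain ⟨k, hk⟩ := he
        subst hk
        push_cast
        rw [← two_mul, show (2:ZMod 2)=0 by decide, zero_mul]
      rw [h0, map_zero, zero_mul, zero_add]
      exact isCoprime_one_right
    · have h1 : ((n : ℕ) : ZMod 2) = 1 := by
        obtain ⟨k, hk⟩ := ho
        subst hk
        push_cast
        rw [show (2:ZMod 2)=0 by decide]; ring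
      rw [h1, map_one, one_mul]
      refine ⟨1, X, ?_⟩
      have h2 : (2 : (ZMod 2)[X]) = 0 := by
        exact_mod_cast CharP.cast_eq_zero ((ZMod 2)[X]) 2
      rw [one_mul, mul_add, hx, mul_one]
      linear_combination ((X : (ZMod 2)[X]) ^ n + X) * h2
  exact hsep.squarefree
end

section
/- If n = 2^k for some integer k ≥ 1, then the multiplicative order of X in Rₙ = F₂[X]/(X^n + X + 1) is exactly n² - 1. -/
open Polynomial

private lemma frob2 {R : Type*} [CommRing R] (h2 : (2 : R) = 0) (a b : R) (k : ℕ) :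
    (a + b) ^ 2 ^ k = a ^ 2 ^ k + b ^ 2 ^ k := by
  induction k with
  | zero => simp
  | succ k ih =>
    rw [pow_succ, pow_mul, pow_mul, pow_mul, ih]
    linear_combination (a ^ 2 ^ k * b ^ 2 ^ k) * h2

theorem stmt_5 (n k : ℕ) (hk : 1 ≤ k) (hn : n = 2 ^ k) :
    orderOf (AdjoinRoot.root (X ^ n + X + 1 : (ZMod 2)[X])) = n ^ 2 - 1 := by
  have hn2 : 2 ≤ n := by
    rw [hn]
    calc 2 = 2 ^ 1 := rfl
      _ ≤ 2 ^ k := Nat.pow_le_pow_right (by norm_num) hk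
  have h2n : 2 ∣ n := hn ▸ dvd_pow_self 2 (by omega)
  set f : (ZMod 2)[X] := X ^ n + X + 1 with hf
  set x : AdjoinRoot f := AdjoinRoot.root f with hx
  -- char 2
  have h_two : (2 : AdjoinRoot f) = 0 := by
    have h1 : ((AdjoinRoot.of f) (1 + 1 : ZMod 2)) = (1 : AdjoinRoot f) + 1 := by
      rw [map_add, map_one]
    have h0 : ((1 : ZMod 2) + 1) = 0 := by decide
    rw [h0, map_zero] at h1
    rw [show (2 : AdjoinRoot f) = 1 + 1 by norm_num, ← h1]
  -- basic relation
  have h0 : x ^ n + x + 1 = 0 := by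
    have h : AdjoinRoot.mk f f = 0 := AdjoinRoot.mk_self
    rwa [hf, map_add, map_add, map_pow, AdjoinRoot.mk_X, map_one] at h
  have hxn : x ^ n = x + 1 := by linear_combination h0 - (x + 1) * h_two
  have hfr : (x + 1) ^ n = x ^ n + 1 := by
    rw [hn]; simpa using frob2 h_two x 1 k
  have hxx : x ^ n ^ 2 = x := by
    rw [sq, pow_mul, hxn, hfr, hxn]; linear_combination h_two
  have hunit : x * (x ^ (n - 1) + 1) = 1 := by
    have e1 : x * (x ^ (n - 1) + 1) = x ^ (n - 1 + 1) + x := by ring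
    rw [e1, show n - 1 + 1 = n by omega, hxn]
    linear_combination x * h_two
  have hsq1 : 1 ≤ n ^ 2 := Nat.one_le_pow _ _ (by omega)
  have hxN : x ^ (n ^ 2 - 1) = 1 := by
    have e1 : x ^ (n ^ 2 - 1) * x = x := by
      rw [← pow_succ, show n ^ 2 - 1 + 1 = n ^ 2 by omega]; exact hxx
    calc x ^ (n ^ 2 - 1) = x ^ (n ^ 2 - 1) * (x * (x ^ (n - 1) + 1)) := by
            rw [hunit, mul_one]
      _ = (x ^ (n ^ 2 - 1) * x) * (x ^ (n - 1) + 1) := by ring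
      _ = x * (x ^ (n - 1) + 1) := by rw [e1]
      _ = 1 := hunit
  have hprod : (n - 1) * (n + 1) = n ^ 2 - 1 := by
    obtain ⟨m, rfl⟩ : ∃ m, n = m + 2 := ⟨n - 2, by omega⟩
    have e1 : (m + 1) * (m + 3) = m ^ 2 + 4 * m + 3 := by ring
    have e2 : (m + 2) ^ 2 = m ^ 2 + 4 * m + 4 := by ring
    rw [show m + 2 - 1 = m + 1 by omega, show m + 2 + 1 = m + 3 by omega]
    omega
  have hfdeg : f.natDegree = n := by
    have e : f = X ^ n + (X + 1) := by rw [hf]; ring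
    rw [e, natDegree_add_eq_left_of_degree_lt, natDegree_X_pow]
    calc degree (X + 1 : (ZMod 2)[X])
        ≤ max (degree (X : (ZMod 2)[X])) (degree (1 : (ZMod 2)[X])) := degree_add_le _ _
      _ ≤ 1 := by rw [degree_X, degree_one]; norm_num
      _ < degree ((X : (ZMod 2)[X]) ^ n) := by
          rw [degree_X_pow]; exact_mod_cast by omega
  have hf0 : f ≠ 0 := by
    intro h
    have := hfdeg
    rw [h, natDegree_zero] at this
    omega
  -- order of x^(n-1) is n+1
  have hb : orderOf (x ^ (n - 1)) = n + 1 := by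
    have hpow : (x ^ (n - 1)) ^ (n + 1) = 1 := by
      rw [← pow_mul, hprod]; exact hxN
    have hdvd : orderOf (x ^ (n - 1)) ∣ n + 1 := orderOf_dvd_of_pow_eq_one hpow
    by_contra hne
    set b := orderOf (x ^ (n - 1)) with hbdef
    obtain ⟨c, hc⟩ := hdvd
    have hbpos : 1 ≤ b := by
      rcases Nat.eq_zero_or_pos b with h | h
      · rw [h, zero_mul] at hc; omega
      · omega
    have hble : 2 * b ≤ n + 1 := by
      have hc2 : 2 ≤ c := by by_contra h; interval_cases c <;> omega
      calc 2 * b ≤ c * b := Nat.mul_le_mul_right b hc2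
        _ = n + 1 := by rw [mul_comm]; exact hc.symm
    have hbodd : b % 2 = 1 := by
      rcases Nat.even_or_odd b with h | h
      · exfalso
        obtain ⟨d, hd⟩ := h
        have h21 : 2 ∣ n + 1 := ⟨d * c, by rw [hc, hd]; ring⟩
        obtain ⟨u, hu⟩ := h21
        obtain ⟨v, hv⟩ := h2n
        omega
      · obtain ⟨m, hm⟩ := h
        omega
    have hb1 : (x ^ (n - 1)) ^ b = 1 := pow_orderOf_eq_one _
    have hkey : (x + 1) ^ b = x ^ b := by
      calc (x + 1) ^ b = (x ^ n) ^ b := by rw [hxn]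
        _ = x ^ ((n - 1) * b + b) := by
            rw [← pow_mul]
            congr 1
            have e : (n - 1) * b + b = (n - 1 + 1) * b := by ring
            rw [e, show n - 1 + 1 = n by omega]
        _ = (x ^ (n - 1)) ^ b * x ^ b := by rw [pow_add, pow_mul]
        _ = x ^ b := by rw [hb1, one_mul]
    set g : (ZMod 2)[X] := (X + 1) ^ b + X ^ b with hg
    have hmk : AdjoinRoot.mk f g = 0 := by
      rw [hg, map_add, map_pow, map_pow, map_add, AdjoinRoot.mk_X, map_one]
      rw [← hx]
      linear_combination hkey + x ^ b * h_two
    have hfg : f ∣ g := (AdjoinRoot.mk_eq_zero).mp hmk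
    have hgne : g ≠ 0 := by
      intro h
      have hco : g.coeff (b - 1) = 1 := by
        rw [hg, coeff_add, coeff_X_add_one_pow, coeff_X_pow,
          if_neg (by omega : ¬ (b - 1 = b)), add_zero]
        obtain ⟨m, hm⟩ : ∃ m, b = m + 1 := ⟨b - 1, by omega⟩
        have e : b.choose (b - 1) = b := by
          rw [hm, show m + 1 - 1 = m by omega, Nat.choose_succ_self_right]
        rw [e]
        rw [show ((b : ZMod 2)) = ((b % 2 : ℕ) : ZMod 2) from (ZMod.natCast_mod b 2).symm, hbodd]
        norm_num
      rw [h, coeff_zero] at hco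
      exact one_ne_zero hco.symm
    have hdeg : g.natDegree ≤ b := by
      rw [hg]
      refine le_trans (natDegree_add_le _ _) ?_
      rw [natDegree_X_pow]
      refine max_le (le_trans natDegree_pow_le ?_) le_rfl
      have : natDegree (X + 1 : (ZMod 2)[X]) ≤ 1 := by
        refine le_trans (natDegree_add_le _ _) ?_
        simp [natDegree_X]
      calc b * natDegree (X + 1 : (ZMod 2)[X]) ≤ b * 1 := Nat.mul_le_mul_left b this
        _ = b := by omega
    have : n ≤ b := by
      calc n = f.natDegree := hfdeg.symm
        _ ≤ g.natDegree := natDegree_le_of_dvd hfg hgne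
        _ ≤ b := hdeg
    omega
  -- order of x^(n+1) is n-1
  have ha : orderOf (x ^ (n + 1)) = n - 1 := by
    have hpow : (x ^ (n + 1)) ^ (n - 1) = 1 := by
      rw [← pow_mul, mul_comm, hprod]; exact hxN
    have hdvd : orderOf (x ^ (n + 1)) ∣ n - 1 := orderOf_dvd_of_pow_eq_one hpow
    by_contra hne
    set a := orderOf (x ^ (n + 1)) with hadef
    obtain ⟨c, hc⟩ := hdvd
    have hapos : 1 ≤ a := by
      rcases Nat.eq_zero_or_pos a with h | h
      · rw [h, zero_mul] at hc; omega
      · omega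
    have hale : 2 * a ≤ n - 1 := by
      have hc2 : 2 ≤ c := by by_contra h; interval_cases c <;> omega
      calc 2 * a ≤ c * a := Nat.mul_le_mul_right a hc2
        _ = n - 1 := by rw [mul_comm]; exact hc.symm
    have ha1 : (x ^ (n + 1)) ^ a = 1 := pow_orderOf_eq_one _
    have hkey : (x ^ 2 + x) ^ a = 1 := by
      have e : x ^ (n + 1) = x ^ 2 + x := by
        calc x ^ (n + 1) = x ^ n * x := by rw [pow_succ]
          _ = (x + 1) * x := by rw [hxn]
          _ = x ^ 2 + x := by ring
      rw [← e]; exact ha1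
    set g : (ZMod 2)[X] := (X ^ 2 + X) ^ a + 1 with hg
    have hmk : AdjoinRoot.mk f g = 0 := by
      rw [hg, map_add, map_pow, map_add, map_pow, AdjoinRoot.mk_X, map_one]
      rw [← hx]
      linear_combination hkey + h_two
    have hfg : f ∣ g := (AdjoinRoot.mk_eq_zero).mp hmk
    have hgne : g ≠ 0 := by
      intro h
      have hco : g.coeff 0 = 1 := by
        rw [hg, coeff_add, coeff_zero_eq_eval_zero]
        simp [zero_pow (by omega : a ≠ 0)]
      rw [h, coeff_zero] at hco
      exact one_ne_zero hco.symm
    have hdeg : g.natDegree ≤ 2 * a := by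
      rw [hg]
      refine le_trans (natDegree_add_le _ _) ?_
      refine max_le (le_trans natDegree_pow_le ?_) (by simp)
      have : natDegree (X ^ 2 + X : (ZMod 2)[X]) ≤ 2 := by
        refine le_trans (natDegree_add_le _ _) ?_
        simp [natDegree_X, natDegree_X_pow]
      calc a * natDegree (X ^ 2 + X : (ZMod 2)[X]) ≤ a * 2 := Nat.mul_le_mul_left a this
        _ = 2 * a := by omega
    have : n ≤ 2 * a := by
      calc n = f.natDegree := hfdeg.symm
        _ ≤ g.natDegree := natDegree_le_of_dvd hfg hgne
        _ ≤ 2 * a := hdeg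
    omega
  -- combine
  have hbdvd : n + 1 ∣ orderOf x := hb ▸ orderOf_pow_dvd (n - 1)
  have hadvd : n - 1 ∣ orderOf x := ha ▸ orderOf_pow_dvd (n + 1)
  have hcop : Nat.Coprime (n - 1) (n + 1) := by
    have h1 : Nat.gcd (n - 1) (n + 1) ∣ 2 := by
      have := Nat.dvd_sub (Nat.gcd_dvd_right (n - 1) (n + 1)) (Nat.gcd_dvd_left (n - 1) (n + 1))
      rwa [show n + 1 - (n - 1) = 2 by omega] at this
    have h2 : Nat.gcd (n - 1) (n + 1) ∣ n - 1 := Nat.gcd_dvd_left _ _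
    rcases (Nat.dvd_prime Nat.prime_two).mp h1 with h | h
    · exact h
    · exfalso
      rw [h] at h2
      obtain ⟨d, hd⟩ := h2
      obtain ⟨e, he⟩ := h2n
      omega
  have hNdvd : n ^ 2 - 1 ∣ orderOf x := by
    rw [← hprod]
    exact hcop.mul_dvd_of_dvd_of_dvd hadvd hbdvd
  have htdvd : orderOf x ∣ n ^ 2 - 1 := orderOf_dvd_of_pow_eq_one hxN
  exact Nat.dvd_antisymm htdvd hNdvd
end

section
/- If n = 2^k + 1 for some integer k ≥ 1, then X^{n² - n + 1} = 1 in Rₙ = F₂[X]/(X^n + X + 1). -/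
open Polynomial

theorem stmt_6 (n k : ℕ) (hk : 1 ≤ k) (hn : n = 2 ^ k + 1) :
    (AdjoinRoot.root (X ^ n + X + 1 : (ZMod 2)[X])) ^ (n ^ 2 - n + 1) = 1 := by
  set p : (ZMod 2)[X] := X ^ n + X + 1 with hp
  set r := AdjoinRoot.root p with hrdef
  have hk2 : 2 ≤ 2 ^ k := by
    calc 2 = 2 ^ 1 := by norm_num
    _ ≤ 2 ^ k := Nat.pow_le_pow_right (by norm_num) hk
  have hn2 : 3 ≤ n := by omega
  have h2 : (2 : AdjoinRoot p) = 0 := by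
    have h0 : ((2 : (ZMod 2)[X])) = 0 := by
      have : ((2 : ZMod 2)) = 0 := by decide
      rw [show (2 : (ZMod 2)[X]) = C 2 from rfl, this, map_zero]
    calc (2 : AdjoinRoot p) = AdjoinRoot.mk p 2 := (map_ofNat (AdjoinRoot.mk p) 2).symm
      _ = AdjoinRoot.mk p 0 := by rw [h0]
      _ = 0 := map_zero _
  have hroot : r ^ n + r + 1 = 0 := by
    have h := AdjoinRoot.mk_self (f := p)
    rw [hp, map_add, map_add, map_pow, map_one, AdjoinRoot.mk_X] at h
    exact h
  have hR : r ^ n = r + 1 := by linear_combination hroot - (r + 1) * h2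
  -- Frobenius in char 2
  have hsq : ∀ x y : AdjoinRoot p, (x + y) ^ 2 = x ^ 2 + y ^ 2 := fun x y => by
    linear_combination (x * y) * h2
  have hfr : ∀ m : ℕ, ∀ x y : AdjoinRoot p, (x + y) ^ 2 ^ m = x ^ 2 ^ m + y ^ 2 ^ m := by
    intro m
    induction m with
    | zero => intro x y; simp
    | succ m ih =>
      intro x y
      have : (2 : ℕ) ^ (m + 1) = 2 ^ m * 2 := by rw [pow_succ]
      rw [this, pow_mul, pow_mul, pow_mul, ih, hsq]
  have hnm1 : n - 1 = 2 ^ k := by omega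
  have key : r ^ n ^ 2 = r ^ (n - 1) := by
    have e1 : r ^ n ^ 2 = (r ^ n) ^ n := by rw [← pow_mul, sq]
    rw [e1, hR]
    have hsplit : (r + 1) ^ n = (r + 1) ^ 2 ^ k * (r + 1) := by
      rw [← pow_succ, ← hn]
    rw [hsplit, hfr, one_pow, ← hnm1]
    have hrn : r ^ (n - 1) * r = r ^ n := by
      rw [← pow_succ]
      congr 1
      omega
    calc (r ^ (n - 1) + 1) * (r + 1)
        = r ^ (n - 1) * r + r ^ (n - 1) + r + 1 := by ring
      _ = r ^ n + r ^ (n - 1) + r + 1 := by rw [hrn]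
      _ = r ^ (n - 1) := by linear_combination hR + (r + 1) * h2
  have hu : r * (r ^ (n - 1) + 1) = 1 := by
    have hrn : r * r ^ (n - 1) = r ^ n := by
      rw [← pow_succ']
      congr 1
      omega
    calc r * (r ^ (n - 1) + 1) = r * r ^ (n - 1) + r := by ring
      _ = r ^ n + r := by rw [hrn]
      _ = 1 := by linear_combination hR + r * h2
  have hinv : r ^ (n - 1) * (r ^ (n - 1) + 1) ^ (n - 1) = 1 := by
    rw [← mul_pow, hu, one_pow]
  have hsplit2 : r ^ n ^ 2 = r ^ (n - 1) * r ^ (n ^ 2 - n + 1) := by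
    rw [← pow_add]
    congr 1
    obtain ⟨q, hq⟩ : ∃ q, q = n ^ 2 := ⟨_, rfl⟩
    have hle : n ≤ q := hq ▸ Nat.le_self_pow (by norm_num) n
    rw [← hq]
    omega
  calc r ^ (n ^ 2 - n + 1)
      = (r ^ (n - 1) * (r ^ (n - 1) + 1) ^ (n - 1)) * r ^ (n ^ 2 - n + 1) := by
        rw [hinv, one_mul]
    _ = (r ^ (n - 1) + 1) ^ (n - 1) * r ^ n ^ 2 := by rw [hsplit2]; ring
    _ = (r ^ (n - 1) + 1) ^ (n - 1) * r ^ (n - 1) := by rw [key]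
    _ = 1 := by rw [mul_comm, hinv]
end

section
/- If n = 2^k + 1 for some integer k ≥ 1, then the multiplicative order of X in Rₙ = F₂[X]/(X^n + X + 1) is exactly n² - n + 1. -/
open Polynomial Finset

private lemma card_root_le {F : Type*} [Field F] [DecidableEq F] {f : F[X]} (hf : f ≠ 0)
    {s : Finset F} (hs : ∀ x ∈ s, f.eval x = 0) : s.card ≤ f.natDegree := by
  have h1 : s ⊆ f.roots.toFinset := by
    intro x hx
    exact Multiset.mem_toFinset.2 ((Polynomial.mem_roots').2 ⟨hf, hs x hx⟩)
  calc s.card ≤ f.roots.toFinset.card := Finset.card_le_card h1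
    _ ≤ Multiset.card f.roots := Multiset.toFinset_card_le _
    _ ≤ f.natDegree := Polynomial.card_roots' f

private lemma count_lemma (F : Type*) [Field F] [Fintype F] [CharP F 2] [DecidableEq F]
    (Q Q1 e q : ℕ) (hQ1 : Q = Q1 + 1) (hQ1pos : 1 ≤ Q1)
    (hfrob : ∀ a b : F, (a + b) ^ Q = a ^ Q + b ^ Q)
    (hcard : Fintype.card F = Q ^ 3)
    (hq3 : 3 ≤ q) (heq : e * q + 1 = Q ^ 3)
    (hAll : ∀ δ : F, δ ≠ 0 → δ ^ (Q ^ 2) + δ ^ Q + δ = 0 → δ ^ e = 1) : False := by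
  classical
  have h2F : (2 : F) = 0 := by
    have := CharP.cast_eq_zero F 2
    exact_mod_cast this
  have hQ2 : 2 ≤ Q := by omega
  have he0 : e ≠ 0 := by
    rintro rfl
    have : 2 ^ 3 ≤ Q ^ 3 := Nat.pow_le_pow_left hQ2 3
    omega
  have hQQ : Q ^ 2 = Q * Q := sq Q
  -- the set W
  set W : Finset F := univ.filter (fun δ : F => δ ≠ 0 ∧ δ ^ (Q ^ 2) + δ ^ Q + δ = 0) with hW
  set w : ℕ := W.card with hw
  -- Step A : Q^2 ≤ w + 1
  have stepA : Q ^ 2 ≤ w + 1 := by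
    set L : F → F := fun γ => γ ^ Q + γ with hL
    have himg : univ.image L ⊆ insert (0 : F) W := by
      intro c hc
      obtain ⟨γ, -, hγ⟩ := Finset.mem_image.1 hc
      rcases eq_or_ne c 0 with h0 | h0
      · exact Finset.mem_insert.2 (Or.inl h0)
      refine Finset.mem_insert.2 (Or.inr (Finset.mem_filter.2 ⟨Finset.mem_univ _, h0, ?_⟩))
      have hγ' : c = γ ^ Q + γ := hγ.symm
      have hc1 : c ^ Q = γ ^ (Q ^ 2) + γ ^ Q := by
        rw [hγ', hfrob, ← pow_mul, ← hQQ]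
      have hc2 : c ^ (Q ^ 2) = γ ^ (Q ^ 3) + γ ^ (Q ^ 2) := by
        have : c ^ (Q ^ 2) = (c ^ Q) ^ Q := by rw [← pow_mul, ← hQQ]
        rw [this, hc1, hfrob, ← pow_mul, ← pow_mul,
          show Q ^ 2 * Q = Q ^ 3 from by ring, show Q * Q = Q ^ 2 from by ring]
      have hc3 : γ ^ (Q ^ 3) = γ := by
        rw [← hcard]; exact FiniteField.pow_card γ
      linear_combination hc2 + hc1 + hγ' + hc3 + (γ ^ (Q ^ 2) + γ ^ Q + γ) * h2F
    have hfiber : ∀ c ∈ univ.image L, (univ.filter fun γ => L γ = c).card ≤ Q := by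
      intro c _
      have hdeg : (X ^ Q + X - C c : F[X]).natDegree = Q := by
        compute_degree
        · simp only [if_neg (show ¬(1 = Q) by omega), if_neg (show ¬(Q = 0) by omega)]
          norm_num
        · omega
      have hne : (X ^ Q + X - C c : F[X]) ≠ 0 := by
        intro h
        rw [h] at hdeg
        simp at hdeg
        omega
      have := card_root_le hne (s := univ.filter fun γ => L γ = c) ?_
      · omega
      · intro γ hγ
        have : L γ = c := (Finset.mem_filter.1 hγ).2
        simp only [hL] at this
        simp [this]
    have h1 : Fintype.card F ≤ Q * (univ.image L).card := by
      have := Finset.card_le_mul_card_image (f := L) univ Q hfiber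
      simpa using this
    have h2 : (univ.image L).card ≤ w + 1 := by
      calc (univ.image L).card ≤ (insert (0:F) W).card := Finset.card_le_card himg
        _ ≤ W.card + 1 := Finset.card_insert_le _ _
    have h3 : Q ^ 3 ≤ Q * (w + 1) := by
      calc Q ^ 3 = Fintype.card F := hcard.symm
        _ ≤ Q * (univ.image L).card := h1
        _ ≤ Q * (w + 1) := Nat.mul_le_mul_left _ h2
    have h4 : Q ^ 3 = Q * Q ^ 2 := by ring
    rw [h4] at h3
    exact Nat.le_of_mul_le_mul_left h3 (by omega)
  -- Step B : the set H of e-th roots of unity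
  set H : Finset F := univ.filter (fun z : F => z ^ e = 1) with hH
  have hHcard : H.card ≤ e := by
    have hne : (X ^ e - C 1 : F[X]) ≠ 0 := X_pow_sub_C_ne_zero (by omega) 1
    have := card_root_le hne (s := H) ?_
    · rwa [Polynomial.natDegree_X_pow_sub_C] at this
    · intro z hz
      have : z ^ e = 1 := (Finset.mem_filter.1 hz).2
      simp [this]
  have hz0 : ∀ z ∈ H, z ≠ 0 := by
    intro z hz h0
    have : z ^ e = 1 := (Finset.mem_filter.1 hz).2
    rw [h0, zero_pow he0] at this
    exact zero_ne_one this
  -- Step C : double counting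
  set P : Finset (F × F) := W ×ˢ W with hP
  have hmap : ∀ pr ∈ P, pr.2 * pr.1⁻¹ ∈ H := by
    intro pr hpr
    obtain ⟨h1, h2⟩ := Finset.mem_product.1 hpr
    obtain ⟨h10, h1e⟩ := (Finset.mem_filter.1 h1).2
    obtain ⟨h20, h2e⟩ := (Finset.mem_filter.1 h2).2
    refine Finset.mem_filter.2 ⟨Finset.mem_univ _, ?_⟩
    rw [mul_pow, inv_pow, hAll _ h20 h2e, hAll _ h10 h1e, one_mul, inv_one]
  have hsum : P.card = ∑ z ∈ H, (P.filter fun pr => pr.2 * pr.1⁻¹ = z).card :=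
    Finset.card_eq_sum_card_fiberwise hmap
  have hPcard : P.card = w * w := by rw [hP, Finset.card_product]
  -- Step D : fiber bounds
  have stepD : ∀ z ∈ H, (P.filter fun pr => pr.2 * pr.1⁻¹ = z).card ≤
      if z ^ Q = z then w else Q1 := by
    intro z hz
    have hzne : z ≠ 0 := hz0 z hz
    -- inject into the set S of δ ∈ W with z*δ ∈ W
    set S : Finset F := W.filter (fun δ => z * δ ≠ 0 ∧
      (z*δ) ^ (Q ^ 2) + (z*δ) ^ Q + (z*δ) = 0) with hS
    have hinj : (P.filter fun pr => pr.2 * pr.1⁻¹ = z).card ≤ S.card := by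
      apply Finset.card_le_card_of_injOn (fun pr => pr.1)
      · intro pr hpr
        obtain ⟨hprP, hprz⟩ := Finset.mem_filter.1 hpr
        obtain ⟨h1, h2⟩ := Finset.mem_product.1 hprP
        obtain ⟨h10, h1e⟩ := (Finset.mem_filter.1 h1).2
        obtain ⟨h20, h2e⟩ := (Finset.mem_filter.1 h2).2
        have hpr2 : pr.2 = z * pr.1 := by
          rw [← hprz]
          field_simp
        refine Finset.mem_filter.2 ⟨h1, ?_, ?_⟩
        · rw [← hpr2]; exact h20
        · rw [← hpr2]; exact h2e
      · intro pr hpr pr' hpr' hfst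
        obtain ⟨hprP, hprz⟩ := Finset.mem_filter.1 hpr
        obtain ⟨hprP', hprz'⟩ := Finset.mem_filter.1 hpr'
        obtain ⟨h1, -⟩ := Finset.mem_product.1 hprP
        obtain ⟨h1', -⟩ := Finset.mem_product.1 hprP'
        have h10 : pr.1 ≠ 0 := ((Finset.mem_filter.1 h1).2).1
        have h10' : pr'.1 ≠ 0 := ((Finset.mem_filter.1 h1').2).1
        have hpr2 : pr.2 = z * pr.1 := by rw [← hprz]; field_simp
        have hpr2' : pr'.2 = z * pr'.1 := by rw [← hprz']; field_simp
        have hfst' : pr.1 = pr'.1 := hfst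
        have : pr.2 = pr'.2 := by rw [hpr2, hpr2', hfst']
        exact Prod.ext hfst' this
    refine le_trans hinj ?_
    by_cases hzQ : z ^ Q = z
    · rw [if_pos hzQ]
      calc S.card ≤ W.card := Finset.card_le_card (Finset.filter_subset _ _)
        _ = w := rfl
    · rw [if_neg hzQ]
      -- all δ ∈ S satisfy δ^Q1 = ρ
      set ρ : F := (z ^ (Q ^ 2) + z) * (z ^ (Q ^ 2) + z ^ Q)⁻¹ with hρ
      have hune : z ^ (Q ^ 2) + z ^ Q ≠ 0 := by
        have h1 : z ^ (Q ^ 2) + z ^ Q = (z ^ Q + z) ^ Q := by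
          rw [hfrob, ← pow_mul, ← hQQ]
        rw [h1]
        apply pow_ne_zero
        intro h
        apply hzQ
        have := neg_eq_of_add_eq_zero_left h
        rw [CharTwo.neg_eq] at this
        exact this.symm
      have hne : (X ^ Q1 - C ρ : F[X]) ≠ 0 := X_pow_sub_C_ne_zero (by omega) ρ
      have := card_root_le hne (s := S) ?_
      · rwa [Polynomial.natDegree_X_pow_sub_C] at this
      · intro δ hδ
        obtain ⟨hδW, -, hzδe⟩ := Finset.mem_filter.1 hδ
        obtain ⟨hδ0, hδe⟩ := (Finset.mem_filter.1 hδW).2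
        have hzδe' : z ^ (Q^2) * δ ^ (Q^2) + z ^ Q * δ ^ Q + z * δ = 0 := by
          rw [← mul_pow, ← mul_pow]; exact hzδe
        have hlin : δ ^ Q * (z ^ (Q ^ 2) + z ^ Q) = δ * (z ^ (Q ^ 2) + z) := by
          linear_combination (z ^ (Q^2)) * hδe - hzδe' +
            (δ ^ Q * z ^ Q - δ * z ^ (Q ^ 2)) * h2F
        have hpow : δ ^ Q = δ ^ Q1 * δ := by
          rw [hQ1, pow_succ]
        have h5 : δ ^ Q1 * (z ^ (Q ^ 2) + z ^ Q) = z ^ (Q ^ 2) + z := by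
          apply mul_right_cancel₀ hδ0
          linear_combination hlin - (z ^ (Q ^ 2) + z ^ Q) * hpow
        have : δ ^ Q1 = ρ := by
          rw [hρ, ← h5]
          field_simp
        simp [this]
  -- Step E : combine
  have hKcard : (H.filter fun z => z ^ Q = z).card ≤ Q1 := by
    have hne : (X ^ Q1 - C 1 : F[X]) ≠ 0 := X_pow_sub_C_ne_zero (by omega) 1
    have := card_root_le hne (s := H.filter fun z => z ^ Q = z) ?_
    · rwa [Polynomial.natDegree_X_pow_sub_C] at this
    · intro z hz
      obtain ⟨hzH, hzQ⟩ := Finset.mem_filter.1 hz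
      have hzne : z ≠ 0 := hz0 z hzH
      have : z ^ Q1 = 1 := by
        apply mul_right_cancel₀ hzne
        rw [one_mul, ← pow_succ, ← hQ1, hzQ]
      simp [this]
    -- cardinality of filtered complement
  have hstep : w * w ≤ Q1 * w + e * Q1 := by
    calc w * w = P.card := hPcard.symm
      _ = ∑ z ∈ H, (P.filter fun pr => pr.2 * pr.1⁻¹ = z).card := hsum
      _ ≤ ∑ z ∈ H, (if z ^ Q = z then w else Q1) := Finset.sum_le_sum stepD
      _ = (∑ z ∈ H.filter (fun z => z ^ Q = z), w) +
          (∑ z ∈ H.filter (fun z => ¬ z ^ Q = z), Q1) := Finset.sum_ite _ _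
      _ = (H.filter fun z => z ^ Q = z).card * w +
          (H.filter fun z => ¬ z ^ Q = z).card * Q1 := by
            rw [Finset.sum_const, Finset.sum_const, smul_eq_mul, smul_eq_mul]
      _ ≤ Q1 * w + e * Q1 := by
            apply Nat.add_le_add
            · exact Nat.mul_le_mul_right _ hKcard
            · apply Nat.mul_le_mul_right
              exact le_trans (Finset.card_filter_le _ _) hHcard
  -- Step F : numeric contradiction
  have h3e : 3 * e ≤ e * q := by
    rw [mul_comm 3 e]
    exact Nat.mul_le_mul_left _ hq3
  have e2 : (Q1 + 1) ^ 2 = Q1 ^ 2 + 2 * Q1 + 1 := by ring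
  have e3 : (Q1 + 1) ^ 3 = Q1 ^ 3 + 3 * Q1 ^ 2 + 3 * Q1 + 1 := by ring
  rw [hQ1] at stepA heq
  rw [e2] at stepA
  rw [e3] at heq
  have hwge : Q1 ^ 2 + 2 * Q1 ≤ w := by omega
  have h3e' : 3 * e ≤ Q1 ^ 3 + 3 * Q1 ^ 2 + 3 * Q1 := by omega
  obtain ⟨s, hs⟩ : ∃ s, w = Q1 ^ 2 + 2 * Q1 + s := ⟨w - (Q1 ^ 2 + 2 * Q1), by omega⟩
  rw [hs] at hstep
  nlinarith [sq_nonneg Q1, sq_nonneg s, hQ1pos, hstep, h3e']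

theorem stmt_7 (n k : ℕ) (hk : 1 ≤ k) (hn : n = 2 ^ k + 1) :
    orderOf (AdjoinRoot.root (X ^ n + X + 1 : (ZMod 2)[X])) = n ^ 2 - n + 1 := by
  subst hn
  classical
  set Q : ℕ := 2 ^ k with hQdef
  have hQ2 : 2 ≤ Q := by
    calc 2 = 2 ^ 1 := (pow_one 2).symm
      _ ≤ 2 ^ k := Nat.pow_le_pow_right (by norm_num) hk
  have hQeven : 2 ∣ Q := dvd_pow_self 2 (by omega)
  set N : ℕ := Q ^ 2 + Q + 1 with hNdef
  have hsq : (Q + 1) ^ 2 = Q ^ 2 + 2 * Q + 1 := by ring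
  have hNgoal : (Q + 1) ^ 2 - (Q + 1) + 1 = N := by omega
  set p : (ZMod 2)[X] := X ^ (Q + 1) + X + 1 with hpdef
  set x : AdjoinRoot p := AdjoinRoot.root p with hxdef
  -- degree of p
  have hdegp : p.natDegree = Q + 1 := by
    rw [hpdef]
    compute_degree!
    simp [show ¬ Q = 0 by omega]
  -- nontriviality
  haveI : Nontrivial (AdjoinRoot p) := by
    refine ⟨0, 1, fun h => ?_⟩
    have h1 : AdjoinRoot.mk p 1 = 0 := by rw [map_one, ← h]
    have h2 : p ∣ 1 := AdjoinRoot.mk_eq_zero.1 h1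
    have h3 : IsUnit p := isUnit_of_dvd_one h2
    have h4 := Polynomial.natDegree_eq_zero_of_isUnit h3
    omega
  haveI : CharP (AdjoinRoot p) 2 :=
    charP_of_injective_algebraMap (algebraMap (ZMod 2) (AdjoinRoot p)).injective 2
  have h2R : (2 : AdjoinRoot p) = 0 := by
    have := CharP.cast_eq_zero (AdjoinRoot p) 2
    exact_mod_cast this
  have hfrobR : ∀ a b : AdjoinRoot p, (a + b) ^ Q = a ^ Q + b ^ Q := by
    intro a b
    rw [hQdef]
    exact add_pow_char_pow a b 2 k
  -- basic relation
  have h0 : x ^ (Q + 1) + x + 1 = 0 := by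
    have hself := AdjoinRoot.mk_self (f := p)
    rw [hpdef] at hself
    simpa [map_add, map_pow, AdjoinRoot.mk_X, map_one] using hself
  have h1 : x ^ (Q + 1) = x + 1 := by
    linear_combination h0 - (x + 1) * h2R
  have hps : x ^ (Q + 1) = x ^ Q * x := pow_succ x Q
  have hxu : x * (x ^ Q + 1) = 1 := by
    linear_combination h0 - hps - h2R
  have hxunit : IsUnit x := IsUnit.of_mul_eq_one _ hxu
  -- x ^ (N + Q) = x ^ Q
  have hkey : x ^ (N + Q) = x ^ Q := by
    have hmul : (Q + 1) * (Q + 1) = Q ^ 2 + 2 * Q + 1 := by ring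
    have e1 : x ^ (N + Q) = (x ^ (Q + 1)) ^ (Q + 1) := by
      rw [← pow_mul]
      congr 1
      rw [hNdef]
      ring
    rw [e1, h1, pow_succ, hfrobR, one_pow]
    linear_combination h0 - hps
  have hxN : x ^ N = 1 := by
    have h2 : x ^ N * x ^ Q = 1 * x ^ Q := by
      rw [← pow_add, one_mul, hkey]
    exact (hxunit.pow Q).mul_right_cancel h2
  have hord : orderOf x ∣ N := orderOf_dvd_of_pow_eq_one hxN
  -- it remains to show the order is exactly N
  rw [hNgoal]
  by_contra hne
  -- setup the contradiction
  obtain ⟨c, hc⟩ := hord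
  have hN0 : N ≠ 0 := by omega
  have hc1 : c ≠ 1 := by
    intro h
    rw [h, mul_one] at hc
    exact hne hc.symm
  have hc0 : c ≠ 0 := by
    intro h
    rw [h, mul_zero] at hc
    exact hN0 hc
  set q : ℕ := c.minFac with hqdef
  have hq : q.Prime := Nat.minFac_prime hc1
  obtain ⟨t, ht⟩ := c.minFac_dvd
  set M : ℕ := orderOf x * t with hMdef
  have hMq : M * q = N := by
    rw [hMdef, hc, ht]
    ring
  have hM0 : M ≠ 0 := by
    intro h
    rw [h, zero_mul] at hMq
    exact hN0 hMq.symm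
  have hqN : q ∣ N := by
    rw [hc, ht]
    exact ⟨orderOf x * t, by ring⟩
  have hqodd : q ≠ 2 := by
    intro h
    obtain ⟨a, ha⟩ := hQeven
    obtain ⟨b, hb⟩ := hqN
    have hQsq : Q ^ 2 = 2 * (2 * a * a) := by rw [ha]; ring
    rw [h] at hb
    omega
  have hq3 : 3 ≤ q := by
    have := hq.two_le
    omega
  have hxM : x ^ M = 1 := by
    rw [hMdef, pow_mul, pow_orderOf_eq_one, one_pow]
  -- divisibility
  have hdvdM : p ∣ (X : (ZMod 2)[X]) ^ M - 1 := by
    apply AdjoinRoot.mk_eq_zero.1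
    rw [map_sub, map_pow, AdjoinRoot.mk_X, map_one, ← hxdef, hxM, sub_self]
  -- move to the Galois field
  set F := GaloisField 2 (3 * k) with hFdef
  haveI : Fintype F := Fintype.ofFinite F
  have hcardF : Fintype.card F = Q ^ 3 := by
    rw [← Nat.card_eq_fintype_card, GaloisField.card 2 (3 * k) (by omega), hQdef,
      ← pow_mul, mul_comm k 3]
  have hfrobF : ∀ a b : F, (a + b) ^ Q = a ^ Q + b ^ Q := by
    intro a b
    rw [hQdef]
    exact add_pow_char_pow a b 2 k
  -- parameters
  obtain ⟨Q1, hQ1⟩ : ∃ m, Q = m + 1 := ⟨Q - 1, by omega⟩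
  have hQ1pos : 1 ≤ Q1 := by omega
  set e : ℕ := Q1 * M with hedef
  have heq : e * q + 1 = Q ^ 3 := by
    have h5 : e * q = Q1 * N := by rw [hedef, mul_assoc, hMq]
    rw [h5, hNdef, hQ1]
    ring
  -- the key property
  have hAll : ∀ δ : F, δ ≠ 0 → δ ^ (Q ^ 2) + δ ^ Q + δ = 0 → δ ^ e = 1 := by
    intro δ hδ0 hδW
    set α : F := δ ^ Q1 with hαdef
    have hαroot : α ^ (Q + 1) + α + 1 = 0 := by
      have hmul : (α ^ (Q + 1) + α + 1) * δ = δ ^ (Q ^ 2) + δ ^ Q + δ := by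
        rw [hαdef, ← pow_mul]
        have e1 : Q1 * (Q + 1) + 1 = Q ^ 2 := by rw [hQ1]; ring
        have e2 : Q1 + 1 = Q := hQ1.symm
        calc (δ ^ (Q1 * (Q + 1)) + δ ^ Q1 + 1) * δ
            = δ ^ (Q1 * (Q + 1) + 1) + δ ^ (Q1 + 1) + δ := by ring
          _ = δ ^ (Q ^ 2) + δ ^ Q + δ := by rw [e1, e2]
      have := hδW
      rw [← hmul] at this
      rcases mul_eq_zero.1 this with h | h
      · exact h
      · exact absurd h hδ0
    -- evaluate the divisibility at α
    obtain ⟨g, hg⟩ := hdvdM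
    have hα : (Polynomial.aeval α) p = 0 := by
      rw [hpdef]
      simpa [map_add, map_pow, map_one] using hαroot
    have hev : α ^ M - 1 = 0 := by
      have := congrArg (Polynomial.aeval α) hg
      simpa [map_sub, map_pow, map_one, map_mul, hα] using this
    have hαM : α ^ M = 1 := by
      have := sub_eq_zero.1 hev
      exact this
    rw [hedef, pow_mul, ← hαdef]
    exact hαM
  exact count_lemma F Q Q1 e q hQ1 hQ1pos hfrobF hcardF hq3 heq hAll
end

section
/- For all n ≥ 2, t(2^n − 1) divides 2^{t(n)} − 1, where t(m) denotes the multiplicative order of X in F₂[X]/(X^m + X + 1). -/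
open Polynomial

/-- `t m` is the multiplicative order of `X` in `F₂[X]/(X^m + X + 1)`. -/
noncomputable def t (m : ℕ) : ℕ :=
  orderOf (AdjoinRoot.root (X ^ m + X + 1 : (ZMod 2)[X]))

/-- Frobenius `x ↦ x ^ 2` as a `ZMod 2`-linear endomorphism of a `ZMod 2`-algebra. -/
noncomputable def frobLin (R : Type*) [CommRing R] [Algebra (ZMod 2) R] :
    Module.End (ZMod 2) R where
  toFun x := x ^ 2
  map_add' a b := by
    have h2 : (2 : R) = 0 := by
      have h := map_ofNat (algebraMap (ZMod 2) R) 2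
      rw [show ((OfNat.ofNat 2 : ZMod 2)) = 0 from by decide] at h
      simpa using h.symm
    linear_combination a * b * h2
  map_smul' c x := by
    have hc : ∀ c : ZMod 2, c ^ 2 = c := by decide
    simp only [_root_.smul_pow, hc, RingHom.id_apply]

lemma aux (n : ℕ) (hn : 2 ≤ n) :
    orderOf (AdjoinRoot.root (X ^ (2 ^ n - 1) + X + 1 : (ZMod 2)[X])) ∣
      2 ^ orderOf (AdjoinRoot.root (X ^ n + X + 1 : (ZMod 2)[X])) - 1 := by
  set k := orderOf (AdjoinRoot.root (X ^ n + X + 1 : (ZMod 2)[X])) with hk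
  set m := 2 ^ n - 1 with hmdef
  set fm : (ZMod 2)[X] := X ^ m + X + 1 with hfm
  set r : AdjoinRoot fm := AdjoinRoot.root fm with hr
  have h4 : 4 ≤ 2 ^ n := by
    calc (4 : ℕ) = 2 ^ 2 := rfl
    _ ≤ 2 ^ n := Nat.pow_le_pow_right (by norm_num) hn
  have hm1 : 1 ≤ m := by omega
  have hmn : m + 1 = 2 ^ n := by omega
  have h2 : (2 : AdjoinRoot fm) = 0 := by
    have h := map_ofNat (algebraMap (ZMod 2) (AdjoinRoot fm)) 2
    rw [show ((OfNat.ofNat 2 : ZMod 2)) = 0 from by decide] at h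
    simpa using h.symm
  -- the defining relation
  have hrel : r ^ m + r + 1 = 0 := by
    have h : AdjoinRoot.mk fm fm = 0 := AdjoinRoot.mk_self
    rw [hfm] at h
    simpa [map_add, map_pow] using h
  have hrm : r ^ m = r + 1 := by linear_combination hrel - (r + 1) * h2
  have h2n : r ^ 2 ^ n = r ^ 2 + r := by
    rw [← hmn, pow_succ, hrm]; ring
  -- powers of Frobenius
  have hF : ∀ (j : ℕ) (x : AdjoinRoot fm), ((frobLin (AdjoinRoot fm)) ^ j) x = x ^ 2 ^ j := by
    intro j
    induction j with
    | zero => intro x; simp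
    | succ j ih =>
      intro x
      rw [pow_succ', Module.End.mul_apply, ih]
      have : (frobLin (AdjoinRoot fm)) (x ^ 2 ^ j) = (x ^ 2 ^ j) ^ 2 := rfl
      rw [this, ← pow_mul, ← pow_succ]
  -- X^n + X + 1 evaluated at Frobenius kills the root
  have hfn0 : (aeval (frobLin (AdjoinRoot fm)) (X ^ n + X + 1 : (ZMod 2)[X])) r = 0 := by
    rw [map_add, map_add, map_pow, aeval_X, map_one, LinearMap.add_apply, LinearMap.add_apply,
      Module.End.one_apply, hF]
    have h1 : (frobLin (AdjoinRoot fm)) r = r ^ 2 := rfl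
    rw [h1]
    linear_combination h2n + (r ^ 2 + r) * h2
  -- X^n + X + 1 divides X^k - 1
  have hdvd : (X ^ n + X + 1 : (ZMod 2)[X]) ∣ X ^ k - 1 := by
    rw [← AdjoinRoot.mk_eq_zero, map_sub, map_pow, AdjoinRoot.mk_X, map_one, hk,
      sub_eq_zero]
    exact pow_orderOf_eq_one _
  obtain ⟨c, hc⟩ := hdvd
  have hXt : (X ^ k : (ZMod 2)[X]) = 1 + c * (X ^ n + X + 1) := by linear_combination hc
  -- the key identity r ^ (2 ^ k) = r
  have key : r ^ 2 ^ k = r := by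
    have e1 : (aeval (frobLin (AdjoinRoot fm)) (X ^ k : (ZMod 2)[X])) r = r ^ 2 ^ k := by
      rw [map_pow, aeval_X]; exact hF _ r
    have e2 : (aeval (frobLin (AdjoinRoot fm)) (X ^ k : (ZMod 2)[X])) r = r := by
      rw [hXt, map_add, map_one, map_mul, LinearMap.add_apply, Module.End.one_apply,
        Module.End.mul_apply, hfn0, map_zero, add_zero]
    rw [← e1, e2]
  -- r is a unit
  have hpow : r * r ^ (m - 1) = r ^ m := by
    rw [← pow_succ', Nat.sub_add_cancel hm1]
  have hu : r * (r ^ (m - 1) + 1) = 1 := by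
    linear_combination hpow + hrm + r * h2
  have h1k : (1 : ℕ) ≤ 2 ^ k := Nat.one_le_two_pow
  have hstep : r ^ (2 ^ k - 1) * r = r := by
    rw [← pow_succ, Nat.sub_add_cancel h1k, key]
  have hone : r ^ (2 ^ k - 1) = 1 := by
    calc r ^ (2 ^ k - 1) = r ^ (2 ^ k - 1) * (r * (r ^ (m - 1) + 1)) := by rw [hu, mul_one]
      _ = (r ^ (2 ^ k - 1) * r) * (r ^ (m - 1) + 1) := by ring
      _ = r * (r ^ (m - 1) + 1) := by rw [hstep]
      _ = 1 := hu
  exact orderOf_dvd_of_pow_eq_one hone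

theorem stmt_8 (n : ℕ) (hn : 2 ≤ n) : t (2 ^ n - 1) ∣ 2 ^ t n - 1 := by
  unfold t
  exact aux n hn
end

section
/- For n ≥ 2, the set Qₙ = { Σ_{i=0}^{n-1} aᵢ X^{2^i} : aᵢ ∈ F₂ } inside R_{2^n−1} = F₂[X]/(X^{2^n−1} + X + 1) is closed under composition of polynomial representatives, and (Qₙ, +, ∘) is a commutative F₂-algebra isomorphic to Rₙ = F₂[X]/(X^n + X + 1) via the linear map sending X^i to X^{2^i}. -/
open Polynomial

set_option maxHeartbeats 1000000


noncomputable section Stmt9Aux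

theorem two_eq_zero' (R : Type*) [CommRing R] [Algebra (ZMod 2) R] : (2 : R) = 0 := by
  have h := map_ofNat (algebraMap (ZMod 2) R) 2
  rw [show ((OfNat.ofNat 2 : ZMod 2)) = 0 by decide, map_zero] at h
  exact h.symm

/-- Frobenius as a `ZMod 2`-linear map. -/
def frob2_s9 (R : Type*) [CommRing R] [Algebra (ZMod 2) R] : R →ₗ[ZMod 2] R where
  toFun a := a ^ 2
  map_add' a b := by linear_combination a * b * two_eq_zero' R
  map_smul' c a := by
    have hc : c ^ 2 = c := by revert c; decide
    simp only [Algebra.smul_def, mul_pow, ← map_pow, hc, RingHom.id_apply]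

theorem frob2_pow_apply (R : Type*) [CommRing R] [Algebra (ZMod 2) R] (i : ℕ) (y : R) :
    ((frob2_s9 R ^ i) : R →ₗ[ZMod 2] R) y = y ^ 2 ^ i := by
  induction i generalizing y with
  | zero => simp
  | succ i ih =>
    rw [pow_succ, Module.End.mul_apply]
    show (frob2_s9 R ^ i) (y ^ 2) = _
    rw [ih (y ^ 2), ← pow_mul, ← pow_succ']

end Stmt9Aux

/-- For `n ≥ 2`, inside `R_{2^n−1} = F₂[X]/(X^{2^n−1} + X + 1)`, the span `Qₙ` of the
`X^{2^i}` for `i < n` carries a commutative `F₂`-algebra structure where multiplication is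
composition of the representing 2-polynomials, and this algebra is isomorphic to
`Rₙ = F₂[X]/(X^n + X + 1)` via the linear map sending `X^i` to `X^{2^i}`. -/
theorem stmt_9 (n : ℕ) (hn : 2 ≤ n) :
    ∃ e : AdjoinRoot (X ^ n + X + 1 : (ZMod 2)[X]) →ₗ[ZMod 2]
          AdjoinRoot (X ^ (2 ^ n - 1) + X + 1 : (ZMod 2)[X]),
      Function.Injective e ∧
      -- the image of `e` is exactly `Qₙ`, the span of the `X^{2^i}` for `i < n`
      LinearMap.range e = Submodule.span (ZMod 2)
        {x | ∃ i < n, x = (AdjoinRoot.root (X ^ (2 ^ n - 1) + X + 1 : (ZMod 2)[X])) ^ 2 ^ i} ∧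
      -- `e` sends `X^i` to `X^{2^i}`
      (∀ i : ℕ, e ((AdjoinRoot.root (X ^ n + X + 1 : (ZMod 2)[X])) ^ i) =
        (AdjoinRoot.root (X ^ (2 ^ n - 1) + X + 1 : (ZMod 2)[X])) ^ 2 ^ i) ∧
      -- `e` turns multiplication in `Rₙ` into composition of 2-polynomial representatives:
      -- if `a = mk f` with `f = Σ cᵢ Xⁱ`, then `e (a * b) = Σ cᵢ (e b)^{2^i} = f̂ ∘ (e b)`
      (∀ f : (ZMod 2)[X], ∀ b : AdjoinRoot (X ^ n + X + 1 : (ZMod 2)[X]),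
        e (AdjoinRoot.mk (X ^ n + X + 1 : (ZMod 2)[X]) f * b) =
          f.sum fun i c => c • (e b) ^ 2 ^ i) := by
  set m : ℕ := 2 ^ n - 1 with hm
  set p : (ZMod 2)[X] := X ^ n + X + 1 with hp
  set q : (ZMod 2)[X] := X ^ m + X + 1 with hq
  have h2n : 4 ≤ 2 ^ n := by
    calc (4 : ℕ) = 2 ^ 2 := by norm_num
    _ ≤ 2 ^ n := Nat.pow_le_pow_right (by norm_num) hn
  have hm3 : 3 ≤ m := by omega
  have hdX1 : (X + 1 : (ZMod 2)[X]).degree = 1 := by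
    simpa using degree_X_add_C (1 : ZMod 2)
  have hpMon : p.Monic := by
    rw [hp, add_assoc]
    exact monic_X_pow_add (by rw [hdX1]; exact_mod_cast by omega)
  have hqMon : q.Monic := by
    rw [hq, add_assoc]
    exact monic_X_pow_add (by rw [hdX1]; exact_mod_cast by omega)
  have hpdeg : p.degree = n := by
    rw [hp, add_assoc, degree_add_eq_left_of_degree_lt, degree_X_pow]
    rw [degree_X_pow, hdX1]; exact_mod_cast by omega
  have hqdeg : q.degree = m := by
    rw [hq, add_assoc, degree_add_eq_left_of_degree_lt, degree_X_pow]
    rw [degree_X_pow, hdX1]; exact_mod_cast by omega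
  have hpnd : p.natDegree = n := natDegree_eq_of_degree_eq_some hpdeg
  have hqnd : q.natDegree = m := natDegree_eq_of_degree_eq_some hqdeg
  set K := AdjoinRoot q with hK
  set r : K := AdjoinRoot.root q with hr
  have h2K : (2 : K) = 0 := two_eq_zero' K
  -- the root relation
  have hrel : r ^ m + r + 1 = 0 := by
    have h := AdjoinRoot.mk_self (f := q)
    rw [hq] at h
    simpa [map_add, map_pow, AdjoinRoot.mk_X] using h
  have h1 : r ^ m = r + 1 := by linear_combination hrel - (r + 1) * h2K
  have hmn : m + 1 = 2 ^ n := by omega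
  have hfr : r ^ 2 ^ n = r ^ 2 + r := by
    rw [← hmn, pow_succ, h1]; ring
  -- the evaluation of 2-polynomials
  have hAsum : ∀ (f : (ZMod 2)[X]) (y : K),
      aeval (frob2_s9 K) f y = f.sum fun i c => c • y ^ 2 ^ i := by
    intro f y
    rw [aeval_def, eval₂_eq_sum, Polynomial.sum_def, Polynomial.sum_def, LinearMap.sum_apply]
    refine Finset.sum_congr rfl fun i _ => ?_
    rw [Module.End.mul_apply, Module.algebraMap_end_apply, frob2_pow_apply]
  have hApr : aeval (frob2_s9 K) p r = 0 := by
    have h : aeval (frob2_s9 K) p = (frob2_s9 K) ^ n + frob2_s9 K + 1 := by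
      rw [hp]; simp [map_add, map_pow]
    rw [h]
    simp only [LinearMap.add_apply, Module.End.one_apply]
    have hfr2 : frob2_s9 K r = r ^ 2 := rfl
    rw [frob2_pow_apply, hfr2, hfr]
    linear_combination (r ^ 2 + r) * h2K
  set e : AdjoinRoot p →ₗ[ZMod 2] K :=
    LinearMap.applyₗ r ∘ₗ (aeval (frob2_s9 K)).toLinearMap ∘ₗ AdjoinRoot.modByMonicHom hpMon
    with he
  have hL : ∀ f : (ZMod 2)[X], e (AdjoinRoot.mk p f) = aeval (frob2_s9 K) f r := by
    intro f
    have h0 : e (AdjoinRoot.mk p f) =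
        aeval (frob2_s9 K) (AdjoinRoot.modByMonicHom hpMon (AdjoinRoot.mk p f)) r := rfl
    rw [h0, AdjoinRoot.modByMonicHom_mk]
    conv_rhs => rw [← modByMonic_add_div f p]
    rw [map_add, LinearMap.add_apply, mul_comm p, map_mul, Module.End.mul_apply, hApr,
      map_zero, add_zero]
  have hroot : ∀ i : ℕ, e (AdjoinRoot.root p ^ i) = r ^ 2 ^ i := by
    intro i
    have h : (AdjoinRoot.root p) ^ i = AdjoinRoot.mk p (X ^ i) := by
      rw [map_pow, AdjoinRoot.mk_X]
    rw [h, hL, map_pow, aeval_X, frob2_pow_apply]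
  -- membership of all r ^ 2 ^ j in the span
  set S : Set K := {x | ∃ i < n, x = r ^ 2 ^ i} with hS
  have hmem : ∀ j : ℕ, r ^ 2 ^ j ∈ Submodule.span (ZMod 2) S := by
    intro j
    induction j using Nat.strong_induction_on with
    | _ j ih =>
      by_cases hj : j < n
      · exact Submodule.subset_span ⟨j, hj, rfl⟩
      · push_neg at hj
        set k := j - n with hk
        have hjk : j = k + n := by omega
        have hA : ((frob2_s9 K) ^ k) (r ^ 2 ^ n) = r ^ 2 ^ j := by
          rw [frob2_pow_apply, ← pow_mul, ← pow_add]
          have hnk : n + k = j := by omega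
          rw [hnk]
        have hB : ((frob2_s9 K) ^ k) (r ^ 2 ^ n) = r ^ 2 ^ (k + 1) + r ^ 2 ^ k := by
          rw [hfr, map_add, frob2_pow_apply, frob2_pow_apply, ← pow_mul, ← pow_succ']
        rw [← hA, hB]
        exact Submodule.add_mem _ (ih (k + 1) (by omega)) (ih k (by omega))
  -- linear independence
  have hli : LinearIndependent (ZMod 2) (fun i : Fin n => r ^ 2 ^ (i : ℕ)) := by
    set pb := AdjoinRoot.powerBasis' hqMon with hpb
    have hdim : pb.dim = m := by rw [hpb, AdjoinRoot.powerBasis'_dim, hqnd]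
    have hemb : ∀ i : Fin n, 2 ^ (i : ℕ) < pb.dim := by
      intro i
      have h1 : 2 ^ (i : ℕ) ≤ 2 ^ (n - 1) := Nat.pow_le_pow_right (by norm_num) (by omega)
      have h2 : 2 ^ (n - 1) * 2 = 2 ^ n := by
        rw [← pow_succ]
        congr 1
        omega
      rw [hdim]
      omega
    have hb := pb.basis.linearIndependent
    have hcomp := hb.comp (fun i : Fin n => (⟨2 ^ (i : ℕ), hemb i⟩ : Fin pb.dim)) ?_
    · have hfun : (pb.basis ∘ fun i : Fin n => (⟨2 ^ (i : ℕ), hemb i⟩ : Fin pb.dim)) =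
          fun i : Fin n => r ^ 2 ^ (i : ℕ) := by
        funext i
        simp only [Function.comp_apply]
        rw [pb.basis_eq_pow]
        rfl
      rwa [hfun] at hcomp
    · intro a b hab
      have := congrArg Fin.val hab
      simp only at this
      have : (a : ℕ) = (b : ℕ) := Nat.pow_right_injective (le_refl 2) this
      exact Fin.ext this
  -- injectivity
  have hinj : Function.Injective e := by
    rw [← LinearMap.ker_eq_bot, Submodule.eq_bot_iff]
    intro z hz
    obtain ⟨f, rfl⟩ := AdjoinRoot.mk_surjective z
    rw [LinearMap.mem_ker] at hz
    have hmk : AdjoinRoot.mk p (f %ₘ p) = AdjoinRoot.mk p f := by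
      rw [AdjoinRoot.mk_eq_mk]
      exact ⟨-(f /ₘ p), by linear_combination modByMonic_add_div f p⟩
    rw [← hmk] at hz ⊢
    by_cases hf0 : f %ₘ p = 0
    · rw [hf0, map_zero]
    · exfalso
      have hdeg : (f %ₘ p).natDegree < n := by
        have h := degree_modByMonic_lt f hpMon
        rw [hpdeg] at h
        exact (natDegree_lt_iff_degree_lt hf0).mpr h
      rw [hL, hAsum, Polynomial.sum_over_range' _ (fun i => by simp) n hdeg,
        Finset.sum_range] at hz
      have hcoeff := Fintype.linearIndependent_iff.mp hli (fun i : Fin n => (f %ₘ p).coeff i) hz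
      apply hf0
      ext k
      by_cases hk : k < n
      · simpa using hcoeff ⟨k, hk⟩
      · rw [coeff_eq_zero_of_natDegree_lt (by omega)]
        simp
  refine ⟨e, hinj, ?_, hroot, ?_⟩
  · apply le_antisymm
    · rintro x ⟨z, rfl⟩
      obtain ⟨f, rfl⟩ := AdjoinRoot.mk_surjective z
      rw [hL, hAsum, Polynomial.sum_def]
      exact Submodule.sum_mem _ fun i _ =>
        Submodule.smul_mem _ _ (hmem i)
    · rw [Submodule.span_le]
      rintro x ⟨i, hi, rfl⟩
      exact ⟨AdjoinRoot.root p ^ i, hroot i⟩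
  · intro f b
    obtain ⟨g, rfl⟩ := AdjoinRoot.mk_surjective b
    rw [← map_mul, hL, map_mul, Module.End.mul_apply, ← hL g, hAsum]
end

section
/- For n = 2^k with k ≥ 1, every irreducible factor of X^n + X + 1 over F₂ has degree dividing 2k. -/
open Polynomial

theorem stmt_13 (n k : ℕ) (hk : 1 ≤ k) (hn : n = 2 ^ k)
    (g : (ZMod 2)[X]) (hirr : Irreducible g) (hdvd : g ∣ X ^ n + X + 1) :
    g.natDegree ∣ 2 * k := by
  haveI := Fact.mk hirr
  set K := AdjoinRoot g with hK
  set α : K := AdjoinRoot.root g with hα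
  have hg0 : g ≠ 0 := hirr.ne_zero
  haveI hchar : CharP K 2 :=
    charP_of_injective_algebraMap (algebraMap (ZMod 2) K).injective 2
  -- the root satisfies α^n + α + 1 = 0
  have h0 : α ^ n + α + 1 = 0 := by
    have : (aeval α) (X ^ n + X + 1 : (ZMod 2)[X]) = 0 := by
      rw [hα, AdjoinRoot.aeval_eq, AdjoinRoot.mk_eq_zero.mpr hdvd]
    simpa using this
  have h1 : α ^ 2 ^ k = α + 1 := by
    rw [← hn]
    have := h0
    rw [add_assoc, CharTwo.add_eq_iff_eq_add, zero_add] at this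
    exact this
  have h2 : α ^ 2 ^ (2 * k) = α := by
    have e1 : α ^ 2 ^ (2 * k) = (α ^ 2 ^ k) ^ 2 ^ k := by
      rw [← pow_mul, ← pow_add, two_mul]
    rw [e1, h1, add_pow_char_pow, h1, one_pow, add_assoc, CharTwo.add_self_eq_zero,
      add_zero]
  -- hence g divides X^(2^(2k)) - X
  have hdvd2 : g ∣ (X ^ 2 ^ (2 * k) - X : (ZMod 2)[X]) := by
    have hP : (aeval α) (X ^ 2 ^ (2 * k) - X : (ZMod 2)[X]) = 0 := by
      simp [h2]
    refine dvd_trans ?_ (minpoly.dvd (ZMod 2) α hP)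
    rw [hα, AdjoinRoot.minpoly_root hg0]
    exact Dvd.intro _ rfl
  -- g has a root β in GF(2^(2k))
  set L := GaloisField 2 (2 * k) with hL
  have hsplit : Splits ((X ^ 2 ^ (2 * k) - X : (ZMod 2)[X]).map (algebraMap (ZMod 2) L)) :=
    SplittingField.splits _
  have hne : (X ^ 2 ^ (2 * k) - X : (ZMod 2)[X]) ≠ 0 :=
    FiniteField.X_pow_card_pow_sub_X_ne_zero _ (by omega) (by norm_num)
  have hgsplit : Splits (g.map (algebraMap (ZMod 2) L)) :=
    Splits.of_dvd hsplit ((Polynomial.map_ne_zero_iff (algebraMap (ZMod 2) L).injective).mpr hne)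
      (Polynomial.map_dvd _ hdvd2)
  obtain ⟨β, hβ⟩ := hgsplit.exists_eval_eq_zero
    (by rw [degree_map]; exact (ne_of_gt (degree_pos_of_irreducible hirr)).symm.symm)
  have hβ' : (aeval β) g = 0 := by rwa [aeval_def, ← eval_map]
  have hβint : IsIntegral (ZMod 2) β := IsIntegral.of_finite _ β
  have hassoc : Associated (minpoly (ZMod 2) β) g :=
    (minpoly.irreducible hβint).associated_of_dvd hirr (minpoly.dvd _ _ hβ')
  have hdeg : g.natDegree = (minpoly (ZMod 2) β).natDegree :=
    (natDegree_eq_of_degree_eq (degree_eq_degree_of_associated hassoc)).symm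
  have hfr : (minpoly (ZMod 2) β).natDegree
      = Module.finrank (ZMod 2) (IntermediateField.adjoin (ZMod 2) {β}) :=
    (IntermediateField.adjoin.finrank hβint).symm
  have htower : Module.finrank (ZMod 2) (IntermediateField.adjoin (ZMod 2) {β})
      * Module.finrank (IntermediateField.adjoin (ZMod 2) {β}) L
      = Module.finrank (ZMod 2) L :=
    Module.finrank_mul_finrank _ _ _
  have hfin : Module.finrank (ZMod 2) L = 2 * k :=
    GaloisField.finrank 2 (by omega)
  rw [hdeg, hfr]
  exact ⟨_, (hfin.symm.trans htower.symm)⟩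
end

section
/- For n = 2^k + 1 with k ≥ 1, every irreducible factor of X^n + X + 1 over F₂ has degree dividing 3k. -/
open Polynomial

lemma aux_nat (d : ℕ) (hd : 0 < d) : ∀ m, 2 ^ d - 1 ∣ 2 ^ m - 1 → d ∣ m := by
  intro m
  induction m using Nat.strong_induction_on with
  | _ m ih =>
    intro h
    rcases lt_or_ge m d with hm | hm
    · have h1 : (2:ℕ) ^ m < 2 ^ d := Nat.pow_lt_pow_right one_lt_two hm
      have h3 : (1:ℕ) ≤ 2 ^ m := Nat.one_le_two_pow
      have h2 : 2 ^ m - 1 = 0 := Nat.eq_zero_of_dvd_of_lt h (by omega)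
      have h4 : (2:ℕ) ^ m = 1 := by omega
      have h5 : m = 0 := by
        by_contra hm0
        have : (2:ℕ)^m ≠ 1 := Nat.ne_of_gt (Nat.one_lt_two_pow_iff.mpr hm0)
        exact this h4
      simp [h5]
    · have e : (2:ℕ) ^ m = 2 ^ (m - d) * 2 ^ d := by rw [← pow_add]; congr 1; omega
      have h1 : (1:ℕ) ≤ 2 ^ (m - d) := Nat.one_le_two_pow
      have h2 : (1:ℕ) ≤ 2 ^ d := Nat.one_le_two_pow
      have hsplit : 2 ^ m - 1 = 2 ^ (m - d) * (2 ^ d - 1) + (2 ^ (m - d) - 1) := by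
        rw [e, Nat.mul_sub, mul_one]
        have : 2 ^ (m - d) ≤ 2 ^ (m - d) * 2 ^ d := Nat.le_mul_of_pos_right _ (by omega)
        omega
      have key : 2 ^ d - 1 ∣ 2 ^ (m - d) - 1 := by
        have hd2 : 2 ^ d - 1 ∣ 2 ^ (m - d) * (2 ^ d - 1) := Dvd.intro_left _ rfl
        have := (Nat.dvd_add_right hd2).mp (hsplit ▸ h)
        exact this
      have hres := ih (m - d) (by omega) key
      obtain ⟨c, hc⟩ := hres
      exact ⟨c + 1, by rw [Nat.mul_add, mul_one]; omega⟩

theorem stmt_14 (n k : ℕ) (hk : 1 ≤ k) (hn : n = 2 ^ k + 1)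
    (g : (ZMod 2)[X]) (hirr : Irreducible g) (hdvd : g ∣ X ^ n + X + 1) :
    g.natDegree ∣ 3 * k := by
  haveI : Fact (Irreducible g) := ⟨hirr⟩
  set K := AdjoinRoot g with hK
  haveI : CharP K 2 := charP_of_injective_algebraMap (algebraMap (ZMod 2) K).injective 2
  have hg0 : g ≠ 0 := hirr.ne_zero
  set α : K := AdjoinRoot.root g with hα
  -- α^n + α + 1 = 0
  have hroot : α ^ n + α + 1 = 0 := by
    have := AdjoinRoot.mk_eq_zero.mpr hdvd
    simpa [map_add, map_pow, map_one] using this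
  have h2 : (2 : K) = 0 := by exact_mod_cast CharP.cast_eq_zero K 2
  have hαn : α ^ n = α + 1 := by linear_combination hroot - (α + 1) * h2
  set q : ℕ := 2 ^ k with hq
  set β : K := α ^ q with hβdef
  set γ : K := β ^ q with hγdef
  set δ : K := γ ^ q with hδdef
  have hβ : β * α = α + 1 := by
    rw [hβdef, ← pow_succ]
    rw [hn] at hαn
    simpa using hαn
  have hγ : γ * β = β + 1 := by
    have := congrArg (fun x : K => x ^ q) hβ
    simp only [mul_pow] at this
    rwa [hq, add_pow_char_pow, one_pow, ← hβdef, ← hγdef] at this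
  have hδγ : δ * γ = γ + 1 := by
    have := congrArg (fun x : K => x ^ q) hγ
    simp only [mul_pow] at this
    rwa [hq, add_pow_char_pow, one_pow, ← hγdef, ← hδdef] at this
  have hγα : γ * (α + 1) = 1 := by
    linear_combination α * hγ + (γ + 1) * hβ + (γ * α + γ + α - α * γ * β) * h2
  have hδα : δ = α := by
    linear_combination (α + 1) * hδγ + (δ - 1) * hγα + (δ - δ * γ * α - δ * γ + γ * α + γ) * h2
  have hfix : α ^ 2 ^ (3 * k) = α := by
    have : δ = α ^ 2 ^ (3 * k) := by
      rw [hδdef, hγdef, hβdef, ← pow_mul, ← pow_mul, hq, ← pow_add, ← pow_add]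
      congr 1
      congr 1
      ring
    rw [← this, hδα]
  -- every element of K is fixed by x ↦ x ^ 2 ^ (3k)
  have key : ∀ x : K, x ^ 2 ^ (3 * k) = x := by
    intro x
    obtain ⟨p, rfl⟩ := AdjoinRoot.mk_surjective x
    induction p using Polynomial.induction_on with
    | C a =>
      have : (AdjoinRoot.mk g) (C a) = algebraMap (ZMod 2) K a := rfl
      rw [this, ← map_pow, ZMod.pow_card_pow]
    | add p r hp hr =>
      rw [map_add, add_pow_char_pow, hp, hr]
    | monomial m a hm =>
      have e : (C a * X ^ (m + 1) : (ZMod 2)[X]) = (C a * X ^ m) * X := by ring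
      rw [e, map_mul, mul_pow, hm, AdjoinRoot.mk_X, ← hα, hfix]
  -- cardinality
  have hd : 0 < g.natDegree := hirr.natDegree_pos
  let pb := AdjoinRoot.powerBasis hg0
  haveI : Fintype K := Module.fintypeOfFintype pb.basis
  have hcard : Fintype.card K = 2 ^ g.natDegree := by
    rw [Module.card_fintype pb.basis]
    simp [ZMod.card, pb, AdjoinRoot.powerBasis]
  haveI : IsCyclic Kˣ := inferInstance
  obtain ⟨ξ, hξ⟩ := IsCyclic.exists_generator (α := Kˣ)
  have hord : orderOf ξ = 2 ^ g.natDegree - 1 := by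
    rw [orderOf_eq_card_of_forall_mem_zpowers hξ, Nat.card_units, Nat.card_eq_fintype_card, hcard]
  have hξfix : ξ ^ 2 ^ (3 * k) = ξ := by
    ext
    push_cast
    exact key ξ
  have hξ1 : ξ ^ (2 ^ (3 * k) - 1) = 1 := by
    have h1 : (1:ℕ) ≤ 2 ^ (3 * k) := Nat.one_le_two_pow
    have : ξ ^ (2 ^ (3 * k) - 1) * ξ = 1 * ξ := by
      rw [one_mul, ← pow_succ]
      rw [show 2 ^ (3 * k) - 1 + 1 = 2 ^ (3 * k) from by omega]
      exact hξfix
    exact mul_right_cancel this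
  have hdvd2 : 2 ^ g.natDegree - 1 ∣ 2 ^ (3 * k) - 1 := by
    rw [← hord]; exact orderOf_dvd_of_pow_eq_one hξ1
  exact aux_nat _ hd _ hdvd2
end

section
/- Let f and g be irreducible polynomials over F₂ of degrees d and e. Then F₂[X,Y]/(f(X), g(Y)) is isomorphic to a direct product of gcd(d,e) fields each of cardinality 2^{lcm(d,e)}. In particular, it is a field if and only if d and e are coprime. -/
open Polynomial UniqueFactorizationMonoid IntermediateField

set_option synthInstance.maxHeartbeats 1000000
set_option maxHeartbeats 4000000


noncomputable section

variable (f g : (ZMod 2)[X])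

def myI : Ideal (MvPolynomial (Fin 2) (ZMod 2)) :=
  Ideal.span ({Polynomial.aeval (MvPolynomial.X 0) f,
               Polynomial.aeval (MvPolynomial.X 1) g} : Set (MvPolynomial (Fin 2) (ZMod 2)))

abbrev Af := AdjoinRoot f

def gA : (Af f)[X] := g.map (algebraMap (ZMod 2) (Af f))

-- forward map
def fwd : MvPolynomial (Fin 2) (ZMod 2) →+* AdjoinRoot (gA f g) :=
  (MvPolynomial.aeval (R := ZMod 2)
    ![algebraMap (Af f) (AdjoinRoot (gA f g)) (AdjoinRoot.root f),
      AdjoinRoot.root (gA f g)]).toRingHom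

lemma fwd_X0 : fwd f g (MvPolynomial.X 0) = AdjoinRoot.of (gA f g) (AdjoinRoot.root f) := by
  simp [fwd]

lemma fwd_X1 : fwd f g (MvPolynomial.X 1) = AdjoinRoot.root (gA f g) := by
  simp [fwd]

lemma fwd_C (r : ZMod 2) : fwd f g (MvPolynomial.C r) = algebraMap _ _ r := by
  simp [fwd]

lemma fwd_vanish : myI f g ≤ RingHom.ker (fwd f g) := by
  rw [myI, Ideal.span_le]
  rintro x (rfl | rfl)
  · simp only [SetLike.mem_coe, RingHom.mem_ker, fwd, AlgHom.toRingHom_eq_coe,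
      RingHom.coe_coe]
    rw [← Polynomial.aeval_algHom_apply]
    simp only [MvPolynomial.aeval_X, Matrix.cons_val_zero]
    rw [show (algebraMap (Af f) (AdjoinRoot (gA f g)) (AdjoinRoot.root f)) =
      (IsScalarTower.toAlgHom (ZMod 2) (Af f) (AdjoinRoot (gA f g))) (AdjoinRoot.root f) from rfl,
      Polynomial.aeval_algHom_apply]
    simp [AdjoinRoot.aeval_eq]
  · simp only [SetLike.mem_coe, RingHom.mem_ker, fwd, AlgHom.toRingHom_eq_coe,
      RingHom.coe_coe]
    rw [← Polynomial.aeval_algHom_apply]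
    simp only [MvPolynomial.aeval_X, Matrix.cons_val_one, Matrix.head_cons, Matrix.cons_val_zero]
    rw [← Polynomial.aeval_map_algebraMap (Af f)]
    rw [AdjoinRoot.aeval_eq]; exact AdjoinRoot.mk_self

def fwdBar : MvPolynomial (Fin 2) (ZMod 2) ⧸ myI f g →+* AdjoinRoot (gA f g) :=
  Ideal.Quotient.lift (myI f g) (fwd f g) (fun _ ha => fwd_vanish f g ha)

def uu : Af f →+* MvPolynomial (Fin 2) (ZMod 2) ⧸ myI f g :=
  AdjoinRoot.lift ((Ideal.Quotient.mk (myI f g)).comp MvPolynomial.C)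
    (Ideal.Quotient.mk (myI f g) (MvPolynomial.X 0)) (by
      rw [← Polynomial.hom_eval₂, Ideal.Quotient.eq_zero_iff_mem]
      exact Ideal.subset_span (by left; rfl))

lemma uu_eval : (gA f g).eval₂ (uu f g) (Ideal.Quotient.mk (myI f g) (MvPolynomial.X 1)) = 0 := by
  rw [gA, Polynomial.eval₂_map, AdjoinRoot.algebraMap_eq, uu, AdjoinRoot.lift_comp_of,
    ← Polynomial.hom_eval₂, Ideal.Quotient.eq_zero_iff_mem]
  exact Ideal.subset_span (by right; rfl)

def bwd : AdjoinRoot (gA f g) →+* MvPolynomial (Fin 2) (ZMod 2) ⧸ myI f g :=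
  AdjoinRoot.lift (uu f g) (Ideal.Quotient.mk (myI f g) (MvPolynomial.X 1)) (uu_eval f g)

lemma bwd_fwd : (bwd f g).comp (fwdBar f g) = RingHom.id _ := by
  apply Ideal.Quotient.ringHom_ext
  apply MvPolynomial.ringHom_ext
  · intro r
    have h := RingHom.ext_zmod
      ((((bwd f g).comp (fwdBar f g)).comp (Ideal.Quotient.mk (myI f g))).comp MvPolynomial.C)
      (((RingHom.id _).comp (Ideal.Quotient.mk (myI f g))).comp MvPolynomial.C)
    exact RingHom.congr_fun h r
  · intro i
    fin_cases i
    · show bwd f g (fwdBar f g (Ideal.Quotient.mk _ (MvPolynomial.X 0))) = _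
      rw [show fwdBar f g (Ideal.Quotient.mk _ (MvPolynomial.X 0)) = fwd f g (MvPolynomial.X 0)
        from rfl, fwd_X0, bwd, ← RingHom.comp_apply, AdjoinRoot.lift_comp_of, uu,
        AdjoinRoot.lift_root]
      rfl
    · show bwd f g (fwdBar f g (Ideal.Quotient.mk _ (MvPolynomial.X 1))) = _
      rw [show fwdBar f g (Ideal.Quotient.mk _ (MvPolynomial.X 1)) = fwd f g (MvPolynomial.X 1)
        from rfl, fwd_X1, bwd, AdjoinRoot.lift_root]
      rfl

lemma fwd_uu_apply (a : Af f) : fwdBar f g (uu f g a) = AdjoinRoot.of (gA f g) a := by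
  induction a using AdjoinRoot.induction_on with
  | ih p =>
    rw [uu, AdjoinRoot.lift_mk, ← Polynomial.hom_eval₂]
    show fwd f g (p.eval₂ MvPolynomial.C (MvPolynomial.X 0)) = _
    rw [Polynomial.hom_eval₂, fwd_X0]
    have : (fwd f g).comp MvPolynomial.C = algebraMap (ZMod 2) (AdjoinRoot (gA f g)) :=
      RingHom.ext_zmod _ _
    rw [this]
    conv_rhs => rw [← AdjoinRoot.aeval_eq, Polynomial.aeval_def, AdjoinRoot.algebraMap_eq,
      Polynomial.hom_eval₂]
    congr 1

lemma fwd_bwd : (fwdBar f g).comp (bwd f g) = RingHom.id _ := by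
  apply RingHom.ext
  intro b
  induction b using AdjoinRoot.induction_on with
  | ih q =>
    rw [RingHom.comp_apply, bwd, AdjoinRoot.lift_mk, Polynomial.hom_eval₂]
    rw [show fwdBar f g (Ideal.Quotient.mk _ (MvPolynomial.X 1)) = AdjoinRoot.root (gA f g) from
      fwd_X1 f g]
    rw [show (fwdBar f g).comp (uu f g) = AdjoinRoot.of (gA f g) from
      RingHom.ext (fwd_uu_apply f g)]
    rw [← AdjoinRoot.algebraMap_eq, ← Polynomial.aeval_def, AdjoinRoot.aeval_eq]
    rfl

def mainEquiv : (MvPolynomial (Fin 2) (ZMod 2) ⧸ myI f g) ≃+* AdjoinRoot (gA f g) :=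
  RingEquiv.ofRingHom (fwdBar f g) (bwd f g) (fwd_bwd f g) (bwd_fwd f g)


noncomputable section
variable (f g : (ZMod 2)[X])

lemma factor_main [hfI : Fact (Irreducible f)] (hg : Irreducible g)
    {p : (Af f)[X]} (hp : p ∈ normalizedFactors (gA f g)) :
    f.natDegree * p.natDegree = Nat.lcm f.natDegree g.natDegree := by
  have hf : Irreducible f := hfI.out
  have hd1 : 0 < f.natDegree := hf.natDegree_pos
  have he1 : 0 < g.natDegree := hg.natDegree_pos
  set d := f.natDegree with hdd
  set e := g.natDegree with hee
  set N := Nat.lcm d e with hN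
  have hdN : d ∣ N := Nat.dvd_lcm_left d e
  have heN : e ∣ N := Nat.dvd_lcm_right d e
  have hN1 : 0 < N := Nat.pos_of_ne_zero (Nat.lcm_ne_zero hd1.ne' he1.ne')
  haveI : Module.Finite (ZMod 2) (Af f) := (AdjoinRoot.powerBasis hf.ne_zero).finite
  haveI : Finite (Af f) := Module.finite_of_finite (ZMod 2)
  haveI : Fintype (Af f) := Fintype.ofFinite _
  have hfrA : Module.finrank (ZMod 2) (Af f) = d := (AdjoinRoot.powerBasis hf.ne_zero).finrank
  have hcardA : Fintype.card (Af f) = 2 ^ d := by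
    rw [Module.card_eq_pow_finrank (K := ZMod 2), hfrA, ZMod.card]
  have hgA0 : gA f g ≠ 0 := by
    simp only [gA, ne_eq, Polynomial.map_eq_zero]
    exact hg.ne_zero
  have hpirr : Irreducible p := irreducible_of_normalized_factor p hp
  haveI := Fact.mk hpirr
  have hp0 : p ≠ 0 := hpirr.ne_zero
  haveI : Module.Finite (Af f) (AdjoinRoot p) := (AdjoinRoot.powerBasis hp0).finite
  haveI : Finite (AdjoinRoot p) := Module.finite_of_finite (Af f)
  haveI : Fintype (AdjoinRoot p) := Fintype.ofFinite _
  haveI : Module.Finite (ZMod 2) (AdjoinRoot p) := Module.Finite.trans (Af f) (AdjoinRoot p)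
  set α := AdjoinRoot.root p with hα
  have hfinAL : Module.finrank (Af f) (AdjoinRoot p) = p.natDegree :=
    (AdjoinRoot.powerBasis hp0).finrank
  have hm : Module.finrank (ZMod 2) (AdjoinRoot p) = d * p.natDegree := by
    rw [← Module.finrank_mul_finrank (ZMod 2) (Af f) (AdjoinRoot p), hfrA, hfinAL]
  have hmpos : 0 < Module.finrank (ZMod 2) (AdjoinRoot p) := Module.finrank_pos
  have hpdvd : p ∣ gA f g := dvd_of_mem_normalizedFactors hp
  have hroot : Polynomial.aeval α (gA f g) = 0 := by
    obtain ⟨q, hq⟩ := hpdvd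
    rw [hq, map_mul, AdjoinRoot.aeval_eq, AdjoinRoot.mk_self, zero_mul]
  have hgα : Polynomial.aeval α g = 0 := by
    rw [← Polynomial.aeval_map_algebraMap (Af f)]; exact hroot
  have hint : IsIntegral (ZMod 2) α := IsIntegral.of_finite _ _
  have hmindvd : minpoly (ZMod 2) α ∣ g := minpoly.dvd _ _ hgα
  have hmindeg : (minpoly (ZMod 2) α).natDegree = e :=
    Polynomial.natDegree_eq_of_degree_eq (degree_eq_degree_of_associated
      ((minpoly.irreducible hint).associated_of_dvd hg hmindvd))
  have hEfinrank : Module.finrank (ZMod 2) (ZMod 2)⟮α⟯ = e := by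
    rw [IntermediateField.adjoin.finrank hint, hmindeg]
  have heL : e ∣ Module.finrank (ZMod 2) (AdjoinRoot p) :=
    ⟨Module.finrank (ZMod 2)⟮α⟯ (AdjoinRoot p), by
      rw [← hEfinrank, Module.finrank_mul_finrank]⟩
  have hdL : d ∣ Module.finrank (ZMod 2) (AdjoinRoot p) := ⟨p.natDegree, hm⟩
  have hNdvd : N ∣ Module.finrank (ZMod 2) (AdjoinRoot p) := Nat.lcm_dvd hdL heL
  -- upper bound
  haveI : CharP (AdjoinRoot p) 2 :=
    charP_of_injective_algebraMap (algebraMap (ZMod 2) (AdjoinRoot p)).injective 2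
  have hzN : ∀ z : AdjoinRoot p, z ^ 2 ^ N = z := by
    have htop : Subring.closure (Set.range (algebraMap (Af f) (AdjoinRoot p)) ∪ {α}) = ⊤ := by
      have h2 := congrArg Subalgebra.toSubring (AdjoinRoot.adjoinRoot_eq_top (f := p))
      rw [Algebra.adjoin_eq_ring_closure] at h2
      rw [h2]; rfl
    have hle : Subring.closure (Set.range (algebraMap (Af f) (AdjoinRoot p)) ∪ {α}) ≤
        RingHom.eqLocus (iterateFrobenius (AdjoinRoot p) 2 N) (RingHom.id _) := by
      rw [Subring.closure_le]
      rintro x (⟨a, rfl⟩ | rfl)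
      · show iterateFrobenius (AdjoinRoot p) 2 N (algebraMap (Af f) (AdjoinRoot p) a)
          = algebraMap (Af f) (AdjoinRoot p) a
        rw [iterateFrobenius_def, show (2:ℕ) ^ N = Fintype.card (Af f) ^ (N / d) by
            rw [hcardA, ← pow_mul, Nat.mul_div_cancel' hdN],
          ← map_pow, FiniteField.pow_card_pow]
      · show iterateFrobenius (AdjoinRoot p) 2 N α = α
        rw [iterateFrobenius_def]
        haveI : Fintype ((ZMod 2)⟮α⟯) := Fintype.ofFinite _
        have hcardE : Fintype.card ((ZMod 2)⟮α⟯) = 2 ^ e := by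
          rw [Module.card_eq_pow_finrank (K := ZMod 2), hEfinrank, ZMod.card]
        have hmem : α ∈ (ZMod 2)⟮α⟯ := IntermediateField.mem_adjoin_simple_self _ α
        have h3 : (⟨α, hmem⟩ : (ZMod 2)⟮α⟯) ^ 2 ^ N = ⟨α, hmem⟩ := by
          rw [show (2:ℕ) ^ N = Fintype.card ((ZMod 2)⟮α⟯) ^ (N / e) by
            rw [hcardE, ← pow_mul, Nat.mul_div_cancel' heN]]
          exact FiniteField.pow_card_pow _ _
        have h4 := congrArg (Subtype.val) h3
        rwa [SubmonoidClass.coe_pow] at h4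
    intro z
    have hz : iterateFrobenius (AdjoinRoot p) 2 N z = RingHom.id _ z :=
      hle (htop ▸ Subring.mem_top z)
    rwa [iterateFrobenius_def, RingHom.id_apply] at hz
  have hup : Module.finrank (ZMod 2) (AdjoinRoot p) ≤ N := by
    have hlt : 1 < 2 ^ N := Nat.one_lt_two_pow_iff.mpr hN1.ne'
    have hP0 : (X ^ (2^N) - X : (AdjoinRoot p)[X]) ≠ 0 :=
      FiniteField.X_pow_card_sub_X_ne_zero _ hlt
    have hsub : (Finset.univ : Finset (AdjoinRoot p)) ⊆
        (X ^ (2^N) - X : (AdjoinRoot p)[X]).roots.toFinset := by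
      intro z _
      rw [Multiset.mem_toFinset, Polynomial.mem_roots']
      refine ⟨hP0, ?_⟩
      simp [Polynomial.IsRoot, hzN z]
    have hcard : Fintype.card (AdjoinRoot p) ≤ 2 ^ N := by
      calc Fintype.card (AdjoinRoot p) = Finset.univ.card := rfl
        _ ≤ _ := Finset.card_le_card hsub
        _ ≤ Multiset.card (X ^ (2^N) - X : (AdjoinRoot p)[X]).roots :=
            Multiset.toFinset_card_le _
        _ ≤ (X ^ (2^N) - X : (AdjoinRoot p)[X]).natDegree := Polynomial.card_roots' _
        _ = 2 ^ N := FiniteField.X_pow_card_sub_X_natDegree_eq _ hlt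
    have hcL : Fintype.card (AdjoinRoot p) = 2 ^ Module.finrank (ZMod 2) (AdjoinRoot p) := by
      rw [Module.card_eq_pow_finrank (K := ZMod 2), ZMod.card]
    rw [hcL] at hcard
    exact (Nat.pow_le_pow_iff_right one_lt_two).mp hcard
  have hfin : Module.finrank (ZMod 2) (AdjoinRoot p) = N :=
    le_antisymm hup (Nat.le_of_dvd hmpos hNdvd)
  omega
end

noncomputable section
variable (f g : (ZMod 2)[X])

lemma decomp [hfI : Fact (Irreducible f)] (hg : Irreducible g) :
    Nonempty (AdjoinRoot (gA f g) ≃+*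
      (Fin (Nat.gcd f.natDegree g.natDegree) → GaloisField 2 (Nat.lcm f.natDegree g.natDegree))) := by
  have hf := hfI.out
  have hd1 : 0 < f.natDegree := hf.natDegree_pos
  have he1 : 0 < g.natDegree := hg.natDegree_pos
  set d := f.natDegree with hdd
  set e := g.natDegree with hee
  set N := Nat.lcm d e with hN
  have hdN : d ∣ N := Nat.dvd_lcm_left d e
  have hN1 : 0 < N := Nat.pos_of_ne_zero (Nat.lcm_ne_zero hd1.ne' he1.ne')
  have hgA0 : gA f g ≠ 0 := by
    simp only [gA, ne_eq, Polynomial.map_eq_zero]; exact hg.ne_zero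
  have hsep : (gA f g).Separable :=
    (PerfectField.separable_of_irreducible hg).map
  have hsq : Squarefree (gA f g) := hsep.squarefree
  have hnodup := (squarefree_iff_nodup_normalizedFactors hgA0).mp hsq
  set t : Finset ((Af f)[X]) := ⟨normalizedFactors (gA f g), hnodup⟩ with ht
  have hcop : ∀ (i j : {x // x ∈ t}), i ≠ j → IsCoprime (i.val) (j.val) := by
    rintro ⟨x, hx⟩ ⟨y, hy⟩ hne
    refine (irreducible_of_normalized_factor x hx).coprime_iff_not_dvd.mpr ?_
    intro hdvd
    have hxy : x = y := by
      have hass := (irreducible_of_normalized_factor x hx).associated_of_dvd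
        (irreducible_of_normalized_factor y hy) hdvd
      calc x = normalize x := (normalize_normalized_factor x hx).symm
        _ = normalize y := normalize_eq_normalize hass.dvd hass.symm.dvd
        _ = y := normalize_normalized_factor y hy
    exact hne (Subtype.ext hxy)
  have hprod : (∏ i : {x // x ∈ t}, (i.val : (Af f)[X])) = (normalizedFactors (gA f g)).prod := by
    rw [Finset.prod_coe_sort t (fun x => x), Finset.prod_eq_multiset_prod, Multiset.map_id']
  have hassoc : Associated (∏ i : {x // x ∈ t}, (i.val : (Af f)[X])) (gA f g) := by
    rw [hprod]; exact prod_normalizedFactors hgA0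
  have hspan : Ideal.span {gA f g} = ⨅ i : {x // x ∈ t}, Ideal.span {(i.val : (Af f)[X])} := by
    rw [Ideal.iInf_span_singleton hcop]
    exact (Ideal.span_singleton_eq_span_singleton.mpr hassoc).symm
  have hpair : Pairwise (Function.onFun IsCoprime fun i : {x // x ∈ t} =>
      Ideal.span {(i.val : (Af f)[X])}) :=
    fun i j hne => (Ideal.isCoprime_span_singleton_iff _ _).mpr (hcop i j hne)
  let crt := Ideal.quotientInfRingEquivPiQuotient
    (fun i : {x // x ∈ t} => Ideal.span {(i.val : (Af f)[X])}) hpair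
  let e1 : AdjoinRoot (gA f g) ≃+*
      ((Af f)[X] ⧸ ⨅ i : {x // x ∈ t}, Ideal.span {(i.val : (Af f)[X])}) :=
    Ideal.quotEquivOfEq hspan
  -- degrees of factors
  have hdeg : ∀ x ∈ normalizedFactors (gA f g), Polynomial.natDegree x = N / d := by
    intro x hx
    have h1 := factor_main f g hg hx
    rw [← hdd, ← hee, ← hN] at h1
    exact (Nat.div_eq_of_eq_mul_left hd1 (by rw [mul_comm]; exact h1.symm)).symm
  -- component equivs
  have key : ∀ i : {x // x ∈ t},
      Nonempty (((Af f)[X] ⧸ Ideal.span {(i.val : (Af f)[X])}) ≃+* GaloisField 2 N) := by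
    rintro ⟨x, hx⟩
    have hxirr : Irreducible x := irreducible_of_normalized_factor x hx
    haveI := Fact.mk hxirr
    haveI : Module.Finite (ZMod 2) (Af f) := (AdjoinRoot.powerBasis hf.ne_zero).finite
    haveI : Finite (Af f) := Module.finite_of_finite (ZMod 2)
    haveI : Module.Finite (Af f) (AdjoinRoot x) := (AdjoinRoot.powerBasis hxirr.ne_zero).finite
    haveI : Finite (AdjoinRoot x) := Module.finite_of_finite (Af f)
    haveI : Fintype (AdjoinRoot x) := Fintype.ofFinite _
    haveI : Module.Finite (ZMod 2) (AdjoinRoot x) := Module.Finite.trans (Af f) (AdjoinRoot x)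
    haveI : Fintype (GaloisField 2 N) := Fintype.ofFinite _
    have hcardL : Fintype.card (AdjoinRoot x) = 2 ^ N := by
      rw [Module.card_eq_pow_finrank (K := ZMod 2), ZMod.card]
      congr 1
      rw [← Module.finrank_mul_finrank (ZMod 2) (Af f) (AdjoinRoot x),
        (AdjoinRoot.powerBasis hf.ne_zero).finrank, (AdjoinRoot.powerBasis hxirr.ne_zero).finrank]
      show d * x.natDegree = N
      have h1 := factor_main f g hg hx
      rw [← hdd, ← hee, ← hN] at h1
      exact h1
    have hcardK : Fintype.card (GaloisField 2 N) = 2 ^ N := by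
      rw [← Nat.card_eq_fintype_card, GaloisField.card 2 N hN1.ne']
    have hKL : Fintype.card (AdjoinRoot x) = Fintype.card (GaloisField 2 N) := by
      rw [hcardL, hcardK]
    exact ⟨FiniteField.ringEquivOfCardEq hKL⟩
  let e2 := RingEquiv.piCongrRight (fun i => (key i).some)
  -- cardinality of index
  have hcard : Fintype.card {x // x ∈ t} = Nat.gcd d e := by
    have hc1 : Fintype.card {x // x ∈ t} = Multiset.card (normalizedFactors (gA f g)) :=
      Fintype.card_coe t
    have hrep : (normalizedFactors (gA f g)).map Polynomial.natDegree =
        Multiset.replicate (Multiset.card (normalizedFactors (gA f g))) (N / d) := by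
      rw [Multiset.eq_replicate]
      constructor
      · simp
      · intro b hb
        obtain ⟨x, hx, rfl⟩ := Multiset.mem_map.mp hb
        exact hdeg x hx
    have hsum : e = Multiset.card (normalizedFactors (gA f g)) * (N / d) := by
      have h0 : (0 : (Af f)[X]) ∉ normalizedFactors (gA f g) := zero_notMem_normalizedFactors _
      have hdg : ((normalizedFactors (gA f g)).prod).natDegree = e := by
        have hd2 := Polynomial.natDegree_eq_of_degree_eq
          (degree_eq_degree_of_associated (prod_normalizedFactors hgA0))
        rw [hd2]
        show (gA f g).natDegree = e
        rw [gA, Polynomial.natDegree_map]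
      rw [← hdg, Polynomial.natDegree_multiset_prod _ h0, hrep, Multiset.sum_replicate,
        smul_eq_mul]
    -- conclude card = gcd
    have hNd : N / d * d = N := Nat.div_mul_cancel hdN
    have hgcdN : Nat.gcd d e * N = d * e := Nat.gcd_mul_lcm d e
    have hcN : Multiset.card (normalizedFactors (gA f g)) * N = Nat.gcd d e * N := by
      calc Multiset.card (normalizedFactors (gA f g)) * N
          = Multiset.card (normalizedFactors (gA f g)) * (N / d * d) := by rw [hNd]
        _ = Multiset.card (normalizedFactors (gA f g)) * (N / d) * d := by ring
        _ = e * d := by rw [← hsum]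
        _ = Nat.gcd d e * N := by rw [hgcdN]; ring
    rw [hc1]
    exact Nat.eq_of_mul_eq_mul_right hN1 hcN
  let e3 := RingEquiv.piCongrLeft' (fun _ : {x // x ∈ t} => GaloisField 2 N)
    (Fintype.equivFinOfCardEq hcard)
  exact ⟨((e1.trans crt).trans e2).trans e3⟩
end


def oneEquiv (K : Type) [CommRing K] : (Fin 1 → K) ≃+* K :=
  { Equiv.funUnique (Fin 1) K with
    map_mul' := fun _ _ => rfl
    map_add' := fun _ _ => rfl }

theorem stmt_17 (f g : (ZMod 2)[X]) (hf : Irreducible f) (hg : Irreducible g)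
    (d e : ℕ) (hd : d = f.natDegree) (he : e = g.natDegree) :
    (∃ (K : Type) (_ : Field K), Nat.card K = 2 ^ Nat.lcm d e ∧
      Nonempty ((MvPolynomial (Fin 2) (ZMod 2) ⧸
          Ideal.span ({Polynomial.aeval (MvPolynomial.X 0) f,
                       Polynomial.aeval (MvPolynomial.X 1) g} :
            Set (MvPolynomial (Fin 2) (ZMod 2)))) ≃+*
        (Fin (Nat.gcd d e) → K))) ∧
    (IsField (MvPolynomial (Fin 2) (ZMod 2) ⧸
        Ideal.span ({Polynomial.aeval (MvPolynomial.X 0) f,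
                     Polynomial.aeval (MvPolynomial.X 1) g} :
          Set (MvPolynomial (Fin 2) (ZMod 2)))) ↔
      Nat.Coprime d e) := by
  subst hd he
  haveI := Fact.mk hf
  have hd1 : 0 < f.natDegree := hf.natDegree_pos
  have he1 : 0 < g.natDegree := hg.natDegree_pos
  have hN1 : 0 < Nat.lcm f.natDegree g.natDegree :=
    Nat.pos_of_ne_zero (Nat.lcm_ne_zero hd1.ne' he1.ne')
  obtain ⟨E2⟩ := decomp f g hg
  have E : (MvPolynomial (Fin 2) (ZMod 2) ⧸ myI f g) ≃+*
      (Fin (Nat.gcd f.natDegree g.natDegree) →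
        GaloisField 2 (Nat.lcm f.natDegree g.natDegree)) :=
    (mainEquiv f g).trans E2
  constructor
  · exact ⟨GaloisField 2 (Nat.lcm f.natDegree g.natDegree), inferInstance,
      GaloisField.card 2 _ hN1.ne', ⟨E⟩⟩
  · constructor
    · intro hIsF
      by_contra hcop
      rw [Nat.Coprime] at hcop
      have hgcd0 : Nat.gcd f.natDegree g.natDegree ≠ 0 := by
        intro h0
        rw [Nat.gcd_eq_zero_iff] at h0
        omega
      have hn : 2 ≤ Nat.gcd f.natDegree g.natDegree := by omega
      have hIsF' : IsField (Fin (Nat.gcd f.natDegree g.natDegree) →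
          GaloisField 2 (Nat.lcm f.natDegree g.natDegree)) :=
        MulEquiv.isField hIsF E.symm.toMulEquiv
      set n := Nat.gcd f.natDegree g.natDegree with hn'
      set K := GaloisField 2 (Nat.lcm f.natDegree g.natDegree) with hK'
      have hne : (⟨0, by omega⟩ : Fin n) ≠ ⟨1, by omega⟩ := by
        simp [Fin.ext_iff]
      set u : Fin n → K := Pi.single ⟨0, by omega⟩ 1 with hu'
      set v : Fin n → K := Pi.single ⟨1, by omega⟩ 1 with hv'
      have hu : u ≠ 0 := by
        intro h
        have := congrFun h ⟨0, by omega⟩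
        rw [hu', Pi.single_eq_same] at this
        exact one_ne_zero this
      have hv : v ≠ 0 := by
        intro h
        have := congrFun h ⟨1, by omega⟩
        rw [hv', Pi.single_eq_same] at this
        exact one_ne_zero this
      have huv : u * v = 0 := by
        funext i
        rw [Pi.zero_apply, Pi.mul_apply, hu', hv', Pi.single_apply, Pi.single_apply]
        by_cases h0 : i = ⟨0, by omega⟩
        · rw [if_pos h0, if_neg (by rw [h0]; exact hne), mul_zero]
        · rw [if_neg h0, zero_mul]
      obtain ⟨w, hw⟩ := hIsF'.mul_inv_cancel hu
      have hv0 : v = 0 := by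
        calc v = 1 * v := (one_mul v).symm
          _ = (u * w) * v := by rw [hw]
          _ = w * (u * v) := by ring
          _ = 0 := by rw [huv, mul_zero]
      exact hv hv0
    · intro hcop
      have h1 : Nat.gcd f.natDegree g.natDegree = 1 := hcop
      rw [h1] at E
      exact MulEquiv.isField (Field.toIsField _)
        (E.trans (oneEquiv (GaloisField 2 (Nat.lcm f.natDegree g.natDegree)))).toMulEquiv
end
end

section
/- If X^n + X + 1 has r ≥ 2 distinct irreducible factors over F₂, then X^{2^n − 1} + X + 1 has at least 2^r − 1 irreducible factors (counted with multiplicity at least, i.e., it is a product of at least 2^r − 1 non-unit polynomials) over F₂. -/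
open Polynomial

noncomputable section

abbrev R2 := (ZMod 2)[X]

noncomputable def hat (p : R2) : R2 := p.sum fun i a => C a * X ^ (2^i)

lemma zmod2_cases (a : ZMod 2) : a = 0 ∨ a = 1 := by revert a; decide

lemma hat_zero : hat 0 = 0 := by simp [hat]

lemma hat_add (p q : R2) : hat (p + q) = hat p + hat q := by
  unfold hat
  rw [Polynomial.sum_add_index] <;> simp [add_mul]

lemma hat_monomial (i : ℕ) (a : ZMod 2) : hat (monomial i a) = C a * X ^ (2^i) := by
  unfold hat
  rw [Polynomial.sum_monomial_index]
  simp

lemma hat_one : hat 1 = X := by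
  have := hat_monomial 0 1
  simpa using this

lemma hat_C_mul (a : ZMod 2) (p : R2) : hat (C a * p) = C a * hat p := by
  rcases zmod2_cases a with h | h <;> simp [h, hat_zero]

lemma sq_zmod2 (a : ZMod 2) : a * a = a := by revert a; decide

lemma hat_X_mul (p : R2) : hat (X * p) = (hat p)^2 := by
  induction p using Polynomial.induction_on' with
  | add p q hp hq =>
    rw [mul_add, hat_add, hp, hq, hat_add, add_pow_char]
  | monomial j c =>
    rw [X_mul_monomial, hat_monomial, hat_monomial]
    have hc : (C c : R2)^2 = C c := by rw [sq, ← C_mul, sq_zmod2]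
    rw [mul_pow, hc, ← pow_mul, pow_succ]

lemma hat_X_pow_mul (k : ℕ) (p : R2) : hat (X^k * p) = (hat p)^(2^k) := by
  induction k with
  | zero => simp
  | succ k ih =>
    rw [pow_succ, mul_comm (X^k) X, mul_assoc, hat_X_mul, ih, ← pow_mul, pow_succ]

lemma hat_dvd_hat_mul (p q : R2) : hat q ∣ hat (p * q) := by
  induction p using Polynomial.induction_on' with
  | add p p' hp hp' => rw [add_mul, hat_add]; exact dvd_add hp hp'
  | monomial i c =>
    rw [← C_mul_X_pow_eq_monomial, mul_assoc, hat_C_mul, hat_X_pow_mul]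
    exact Dvd.dvd.mul_left (dvd_pow_self _ (Nat.pos_of_ne_zero (pow_ne_zero i two_ne_zero)).ne') _

lemma hat_eq_sum (p : R2) : hat p = ∑ i ∈ p.support, C (p.coeff i) * X ^ (2^i) := rfl

lemma hat_coeff_zero (p : R2) : (hat p).coeff 0 = 0 := by
  rw [hat_eq_sum, finset_sum_coeff]
  refine Finset.sum_eq_zero fun i _ => ?_
  rw [coeff_C_mul, coeff_X_pow, if_neg (Nat.pos_of_ne_zero (pow_ne_zero i two_ne_zero)).ne, mul_zero]

lemma hat_coeff_pow (p : R2) (k : ℕ) : (hat p).coeff (2^k) = p.coeff k := by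
  rw [hat_eq_sum, finset_sum_coeff]
  have h2 : ∀ i, 2^k = 2^i ↔ k = i := by
    intro i
    constructor
    · exact fun h => Nat.pow_right_injective (le_refl 2) h
    · rintro rfl; rfl
  by_cases hk : k ∈ p.support
  · rw [Finset.sum_eq_single_of_mem k hk]
    · simp [coeff_C_mul, coeff_X_pow]
    · intro i _ hik
      rw [coeff_C_mul, coeff_X_pow, if_neg (fun h => hik ((h2 i).mp h).symm), mul_zero]
  · rw [Polynomial.notMem_support_iff.mp hk]
    refine Finset.sum_eq_zero fun i hi => ?_
    rw [coeff_C_mul, coeff_X_pow, if_neg, mul_zero]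
    intro h
    exact hk (((h2 i).mp h) ▸ hi)

lemma X_dvd_hat (p : R2) : X ∣ hat p := X_dvd_iff.mpr (hat_coeff_zero p)

abbrev K2 := AlgebraicClosure (ZMod 2)

instance : CharP K2 2 := charP_of_injective_algebraMap (algebraMap (ZMod 2) K2).injective 2

lemma aeval_hat (β : K2) (p : R2) :
    aeval β (hat p) = ∑ i ∈ p.support, algebraMap (ZMod 2) K2 (p.coeff i) * β^(2^i) := by
  rw [hat_eq_sum, map_sum]
  refine Finset.sum_congr rfl fun i _ => ?_
  rw [map_mul, map_pow, aeval_C, aeval_X]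

lemma aeval_hat_zero_pt (p : R2) : aeval (0:K2) (hat p) = 0 := by
  rw [aeval_hat]
  refine Finset.sum_eq_zero fun i _ => ?_
  rw [zero_pow (Nat.pos_of_ne_zero (pow_ne_zero i two_ne_zero)).ne', mul_zero]

lemma aeval_hat_add_pt (x y : K2) (p : R2) :
    aeval (x + y) (hat p) = aeval x (hat p) + aeval y (hat p) := by
  rw [aeval_hat, aeval_hat, aeval_hat, ← Finset.sum_add_distrib]
  refine Finset.sum_congr rfl fun i _ => ?_
  rw [add_pow_char_pow, mul_add]

lemma aeval_hat_sum_pt {ι : Type*} (s : Finset ι) (x : ι → K2) (p : R2) :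
    aeval (∑ i ∈ s, x i) (hat p) = ∑ i ∈ s, aeval (x i) (hat p) := by
  classical
  induction s using Finset.induction_on with
  | empty => simp [aeval_hat_zero_pt]
  | insert _ _ h ih =>
    rw [Finset.sum_insert h, Finset.sum_insert h, aeval_hat_add_pt, ih]

theorem stmt_18 (n : ℕ) (hn : 2 ≤ n) (r : ℕ) (hr : 2 ≤ r)
    (f : Fin r → (ZMod 2)[X]) (hirr : ∀ i, Irreducible (f i))
    (hdist : Function.Injective f) (hdvd : ∀ i, f i ∣ X ^ n + X + 1)
    (hfac : (X ^ n + X + 1 : (ZMod 2)[X]) = ∏ i, f i) :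
    ∃ g : Fin (2 ^ r - 1) → (ZMod 2)[X],
      (∀ i, ¬ IsUnit (g i)) ∧
      (X ^ (2 ^ n - 1) + X + 1 : (ZMod 2)[X]) = ∏ i, g i := by
  classical
  set FS : Finset (Fin r) → R2 := fun S => ∏ i ∈ S, f i with hFSdef
  set LS : Finset (Fin r) → R2 := fun S => hat (FS S) with hLSdef
  -- units in R2 are 1
  have funit : ∀ p : R2, IsUnit p → p = 1 := by
    intro p hp
    have h2 : ∀ a : ZMod 2, a ≠ 0 → a = 1 := by decide
    obtain ⟨a, ha, rfl⟩ := Polynomial.isUnit_iff.mp hp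
    rw [h2 a ha.ne_zero, map_one]
  -- pairwise coprimality of the f i
  have hcopf : ∀ i j : Fin r, i ≠ j → IsCoprime (f i) (f j) := by
    intro i j hij
    rw [(hirr i).coprime_iff_not_dvd]
    intro hd
    have hassoc := (hirr i).associated_of_dvd (hirr j) hd
    obtain ⟨u, hu⟩ := hassoc
    rw [funit _ u.isUnit, mul_one] at hu
    exact hij (hdist hu)
  have hcopS : ∀ S T : Finset (Fin r), Disjoint S T → IsCoprime (FS S) (FS T) := by
    intro S T hST
    exact IsCoprime.prod_left fun i hi => IsCoprime.prod_right fun j hj =>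
      hcopf i j (by rintro rfl; exact (Finset.disjoint_left.mp hST hi) hj)
  -- divisibility along subsets
  have hdvdL : ∀ {S T : Finset (Fin r)}, S ⊆ T → LS S ∣ LS T := by
    intro S T hST
    obtain ⟨c, hc⟩ := Finset.prod_dvd_prod_of_subset S T f hST
    have : FS T = c * FS S := by simp only [hFSdef]; rw [hc]; ring
    simp only [hLSdef, this]
    exact hat_dvd_hat_mul c (FS S)
  -- Bezout at the hat level
  have hbez : ∀ S T : Finset (Fin r), ∃ A B, LS S * A + LS T * B = LS (S ∩ T) := by
    intro S T
    obtain ⟨u, v, huv⟩ := hcopS (S \ T) T Finset.sdiff_disjoint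
    have hsplit : FS (S \ T) * FS (S ∩ T) = FS S := by
      simp only [hFSdef]
      rw [← Finset.prod_union (Finset.disjoint_sdiff_inter S T), Finset.sdiff_union_inter]
    have key : u * FS S + (v * FS (S ∩ T)) * FS T = FS (S ∩ T) := by
      rw [← hsplit]; linear_combination FS (S ∩ T) * huv
    obtain ⟨A, hA⟩ := hat_dvd_hat_mul u (FS S)
    obtain ⟨B, hB⟩ := hat_dvd_hat_mul (v * FS (S ∩ T)) (FS T)
    refine ⟨A, B, ?_⟩
    have := congrArg hat key
    rw [hat_add] at this
    simp only [hLSdef]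
    rw [← hA, ← hB]
    exact this
  -- the quotients by X
  have hXdvd : ∀ S : Finset (Fin r), ∃ c, LS S = X * c := by
    intro S
    obtain ⟨c, hc⟩ := X_dvd_hat (FS S)
    exact ⟨c, hc⟩
  choose hS hhS using hXdvd
  -- P and Q
  have h2n : 2 ^ n - 1 + 1 = 2 ^ n := Nat.succ_pred_eq_of_pos (pow_pos two_pos n)
  set Q : R2 := X ^ (2 ^ n - 1) + X + 1 with hQdef
  have hLuniv : LS Finset.univ = X ^ (2 ^ n) + X ^ 2 + X := by
    have h1 : FS Finset.univ = X ^ n + X + 1 := hfac.symm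
    have hatXpow : ∀ m : ℕ, hat (X ^ m : R2) = X ^ (2 ^ m) := by
      intro m
      rw [show (X ^ m : R2) = monomial m 1 from by
        rw [← C_mul_X_pow_eq_monomial, map_one, one_mul], hat_monomial, map_one, one_mul]
    have hatX : hat (X : R2) = X ^ 2 := by
      have := hatXpow 1
      rw [pow_one] at this
      rw [this, pow_one]
    have hmain : hat (X ^ n + X + 1 : R2) = X ^ (2 ^ n) + X ^ 2 + X := by
      rw [hat_add, hat_add, hat_one, hatX, hatXpow]
    simp only [hLSdef, h1]
    exact hmain
  have hPQ : LS Finset.univ = X * Q := by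
    have hx1 : (X : R2) * X ^ (2 ^ n - 1) = X ^ (2 ^ n) := by
      rw [← pow_succ', h2n]
    rw [hLuniv, hQdef, mul_add, mul_add, mul_one, hx1]
    ring
  have hQuot : hS Finset.univ = Q := by
    have := hhS Finset.univ
    rw [hPQ] at this
    exact (mul_left_cancel₀ X_ne_zero this.symm)
  -- squarefreeness
  have hsqfP : Squarefree (LS Finset.univ) := by
    have hsep : (LS Finset.univ).Separable := by
      have hder : derivative (LS Finset.univ) = 1 := by
        rw [hLuniv]
        have hc0 : ((2 ^ n : ℕ) : ZMod 2) = 0 := by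
          rw [ZMod.natCast_eq_zero_iff]
          exact dvd_pow_self 2 (by omega)
        have hc2 : (2 : ZMod 2) = 0 := by decide
        simp [derivative_X_pow, hc0, hc2]
        exact CharTwo.add_self_eq_zero 1
      rw [Polynomial.Separable, hder]
      exact isCoprime_one_right
    exact hsep.squarefree
  have hsqf : ∀ S, Squarefree (LS S) := fun S =>
    Squarefree.squarefree_of_dvd (hdvdL (Finset.subset_univ S)) hsqfP
  have hLne : ∀ S, LS S ≠ 0 := fun S => (hsqf S).ne_zero
  have hhne : ∀ S, hS S ≠ 0 := by
    intro S h
    exact hLne S (by rw [hhS S, h, mul_zero])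
  have hsqfh : ∀ S, Squarefree (hS S) := fun S =>
    Squarefree.squarefree_of_dvd (Dvd.intro_left X (hhS S).symm) (hsqf S)
  have hdvdh : ∀ {S T : Finset (Fin r)}, S ⊆ T → hS S ∣ hS T := by
    intro S T hST
    have := hdvdL hST
    rw [hhS S, hhS T] at this
    exact (mul_dvd_mul_iff_left (X_ne_zero (R := ZMod 2))).mp this
  have hcommon : ∀ (d : R2) (S T : Finset (Fin r)),
      d ∣ hS S → d ∣ hS T → d ∣ hS (S ∩ T) := by
    intro d S T h1 h2
    obtain ⟨A, B, hAB⟩ := hbez S T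
    have hXd : X * d ∣ LS (S ∩ T) := by
      rw [← hAB]
      exact dvd_add (Dvd.dvd.mul_right (by rw [hhS S]; exact mul_dvd_mul_left X h1) A)
        (Dvd.dvd.mul_right (by rw [hhS T]; exact mul_dvd_mul_left X h2) B)
    rw [hhS (S ∩ T)] at hXd
    exact (mul_dvd_mul_iff_left (X_ne_zero (R := ZMod 2))).mp hXd
  -- coefficient facts
  have hf0 : ∀ i : Fin r, (f i).coeff 0 ≠ 0 := by
    intro i h
    have hXf : X ∣ f i := X_dvd_iff.mpr h
    have hXF : X ∣ (X ^ n + X + 1 : R2) := hXf.trans (hdvd i)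
    have := X_dvd_iff.mp hXF
    simp only [coeff_add, coeff_X_pow, coeff_X, coeff_one] at this
    norm_num [show ¬ (0 : ℕ) = n by omega] at this
  have hFSsing : ∀ i : Fin r, FS {i} = f i := by
    intro i; simp only [hFSdef]; exact Finset.prod_singleton _ _
  -- each hS {i} is a nonunit with nonzero constant term; choose roots
  have hroots : ∀ i : Fin r, ∃ α : K2, α ≠ 0 ∧ aeval α (hS {i}) = 0 := by
    intro i
    set φ := algebraMap (ZMod 2) K2 with hφ
    have hnu : ¬ IsUnit (hS {i}) := by
      intro hu
      have h1 : hS {i} = 1 := funit _ hu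
      have hLX : LS {i} = X := by rw [hhS {i}, h1, mul_one]
      set d := (f i).natDegree with hd
      have hd1 : 1 ≤ d := (hirr i).natDegree_pos
      have hc : (LS {i}).coeff (2 ^ d) = (f i).coeff d := by
        simp only [hLSdef]
        rw [hat_coeff_pow, hFSsing]
      rw [hLX] at hc
      rw [coeff_X, if_neg (by have := Nat.one_lt_two_pow_iff.mpr (by omega : d ≠ 0); omega)] at hc
      exact (leadingCoeff_ne_zero.mpr (hirr i).ne_zero)
        (by rw [leadingCoeff, ← hd]; exact hc.symm)
    have hdeg : ((hS {i}).map φ).degree ≠ 0 := by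
      rw [Polynomial.degree_map_eq_of_injective φ.injective]
      intro h
      exact hnu (isUnit_iff_degree_eq_zero.mpr h)
    obtain ⟨x, hx⟩ := IsAlgClosed.exists_root _ hdeg
    have hx' : aeval x (hS {i}) = 0 := by
      rw [aeval_def, ← eval_map]; exact hx
    refine ⟨x, ?_, hx'⟩
    rintro rfl
    have hcoeff0 : (hS {i}).coeff 0 ≠ 0 := by
      have h1 : (hS {i}).coeff 0 = (LS {i}).coeff 1 := by
        rw [hhS {i}, coeff_X_mul]
      have h2 : (LS {i}).coeff 1 = (f i).coeff 0 := by
        have := hat_coeff_pow (FS {i}) 0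
        rw [pow_zero] at this
        simp only [hLSdef]
        rw [this, hFSsing]
      rw [h1, h2]
      exact hf0 i
    have : aeval (0 : K2) (hS {i}) = φ ((hS {i}).coeff 0) := by
      rw [aeval_def, ← eval_map, ← Polynomial.coeff_zero_eq_eval_zero, coeff_map]
    rw [this] at hx'
    exact hcoeff0 ((map_eq_zero_iff φ φ.injective).mp hx')
  choose α hα0 hαr using hroots
  have haLS : ∀ (i : Fin r) (S : Finset (Fin r)), i ∈ S → aeval (α i) (LS S) = 0 := by
    intro i S hiS
    obtain ⟨c, hc⟩ := hdvdL (Finset.singleton_subset_iff.mpr hiS)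
    rw [hc, map_mul]
    have h1 : aeval (α i) (LS {i}) = 0 := by
      rw [hhS {i}, map_mul, aeval_X, hαr i, mul_zero]
    rw [h1, zero_mul]
  set β : Finset (Fin r) → K2 := fun S => ∑ i ∈ S, α i with hβdef
  have hβLS : ∀ S, aeval (β S) (LS S) = 0 := by
    intro S
    have hLhat : LS S = hat (FS S) := rfl
    simp only [hβdef, hLhat]
    rw [aeval_hat_sum_pt]
    exact Finset.sum_eq_zero fun i hi => haLS i S hi
  have hβne : ∀ S, ∀ i ∈ S, aeval (β S) (LS (S \ {i})) ≠ 0 := by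
    intro S i hi
    have hLhat : LS (S \ {i}) = hat (FS (S \ {i})) := rfl
    have hsum : aeval (β S) (LS (S \ {i})) = aeval (α i) (LS (S \ {i})) := by
      simp only [hβdef, hLhat]
      rw [aeval_hat_sum_pt]
      refine Finset.sum_eq_single_of_mem i hi fun j hj hji => ?_
      exact haLS j (S \ {i}) (Finset.mem_sdiff.mpr ⟨hj, by simp [hji]⟩)
    rw [hsum]
    intro h0
    obtain ⟨A, B, hAB⟩ := hbez {i} (S \ {i})
    have hint : ({i} : Finset (Fin r)) ∩ (S \ {i}) = ∅ := by
      ext j; simp (config := { contextual := true }) [eq_comm]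
    rw [hint] at hAB
    have hLempty : LS (∅ : Finset (Fin r)) = X := by
      have : FS (∅ : Finset (Fin r)) = 1 := Finset.prod_empty
      show hat (FS ∅) = X
      rw [this, hat_one]
    rw [hLempty] at hAB
    have hev := congrArg (aeval (α i)) hAB
    have h1 : aeval (α i) (LS {i}) = 0 := by
      rw [hhS {i}, map_mul, aeval_X, hαr i, mul_zero]
    rw [map_add, map_mul, map_mul, aeval_X, h1, h0, zero_mul, zero_mul, add_zero] at hev
    exact hα0 i hev.symm
  have hβ0 : ∀ S : Finset (Fin r), S.Nonempty → β S ≠ 0 := by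
    rintro S ⟨i, hi⟩ h0
    refine hβne S i hi ?_
    rw [h0]
    exact aeval_hat_zero_pt _
  have hβh : ∀ S, S.Nonempty → aeval (β S) (hS S) = 0 := by
    intro S hSne
    have h1 := hβLS S
    rw [hhS S, map_mul, aeval_X] at h1
    rcases mul_eq_zero.mp h1 with h | h
    · exact absurd h (hβ0 S hSne)
    · exact h
  have hβhne : ∀ S, ∀ i ∈ S, aeval (β S) (hS (S \ {i})) ≠ 0 := by
    intro S i hi h0
    exact hβne S i hi (by rw [hhS (S \ {i}), map_mul, h0, mul_zero])
  -- the gcd-complement construction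
  set D : Finset (Fin r) → R2 :=
    fun S => EuclideanDomain.gcd (hS S) (∏ i ∈ S, hS (S \ {i})) with hDdef
  have hDdvdh : ∀ S, D S ∣ hS S := fun S => EuclideanDomain.gcd_dvd_left _ _
  have hDdvdprod : ∀ S, D S ∣ ∏ i ∈ S, hS (S \ {i}) := fun S =>
    EuclideanDomain.gcd_dvd_right _ _
  have hhdvdD : ∀ S, ∀ i ∈ S, hS (S \ {i}) ∣ D S := fun S i hi =>
    EuclideanDomain.dvd_gcd (hdvdh Finset.sdiff_subset) (Finset.dvd_prod_of_mem _ hi)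
  choose g hg using hDdvdh
  have hgdvdh : ∀ S, g S ∣ hS S := fun S => ⟨D S, by rw [hg S]; ring⟩
  have hgnonunit : ∀ S, S.Nonempty → ¬ IsUnit (g S) := by
    intro S hne hu
    have h0 := hβh S hne
    rw [hg S, map_mul] at h0
    have hDne0 : aeval (β S) (D S) ≠ 0 := by
      obtain ⟨c, hc⟩ := hDdvdprod S
      intro hD0
      have hz : aeval (β S) (∏ i ∈ S, hS (S \ {i})) = 0 := by
        rw [hc, map_mul, hD0, zero_mul]
      rw [map_prod] at hz
      obtain ⟨i, hi, hzi⟩ := Finset.prod_eq_zero_iff.mp hz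
      exact hβhne S i hi hzi
    have hgne0 : aeval (β S) (g S) ≠ 0 := (hu.map (aeval (β S))).ne_zero
    rcases mul_eq_zero.mp h0 with h | h
    · exact hDne0 h
    · exact hgne0 h
  have hcopgD : ∀ S, IsCoprime (g S) (D S) := by
    intro S
    rw [← EuclideanDomain.gcd_isUnit_iff]
    refine (hsqfh S) _ ?_
    have h1 := EuclideanDomain.gcd_dvd_left (g S) (D S)
    have h2 := EuclideanDomain.gcd_dvd_right (g S) (D S)
    have : g S * D S = hS S := by rw [hg S]; ring
    rw [← this]
    exact mul_dvd_mul h1 h2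
  have haux : ∀ S T : Finset (Fin r), (∃ i ∈ S, i ∉ T) →
      ∀ d : R2, d ∣ g S → d ∣ g T → IsUnit d := by
    rintro S T ⟨i, hiS, hiT⟩ d hdS hdT
    have h3 : d ∣ hS (S ∩ T) := hcommon d S T (hdS.trans (hgdvdh S)) (hdT.trans (hgdvdh T))
    have h4 : hS (S ∩ T) ∣ hS (S \ {i}) := by
      refine hdvdh fun j hj => ?_
      rw [Finset.mem_inter] at hj
      rw [Finset.mem_sdiff, Finset.mem_singleton]
      exact ⟨hj.1, fun hji => hiT (hji ▸ hj.2)⟩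
    have h5 : d ∣ D S := (h3.trans h4).trans (hhdvdD S i hiS)
    exact (hcopgD S).isUnit_of_dvd' hdS h5
  have hgcop : ∀ S T : Finset (Fin r), S ≠ T → IsCoprime (g S) (g T) := by
    intro S T hST
    have hcase : (∃ i ∈ S, i ∉ T) ∨ (∃ i ∈ T, i ∉ S) := by
      by_contra h
      push_neg at h
      exact hST (Finset.Subset.antisymm h.1 h.2)
    rcases hcase with h | h
    · rw [← EuclideanDomain.gcd_isUnit_iff]
      exact haux S T h _ (EuclideanDomain.gcd_dvd_left _ _) (EuclideanDomain.gcd_dvd_right _ _)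
    · have : IsCoprime (g T) (g S) := by
        rw [← EuclideanDomain.gcd_isUnit_iff]
        exact haux T S h _ (EuclideanDomain.gcd_dvd_left _ _) (EuclideanDomain.gcd_dvd_right _ _)
      exact this.symm
  -- assemble the product
  set A : Finset (Finset (Fin r)) := Finset.univ.filter (fun S => S.Nonempty) with hAdef
  have hmemA : ∀ S, S ∈ A ↔ S.Nonempty := by
    intro S; rw [hAdef, Finset.mem_filter]; simp
  have hpair : (↑A : Set (Finset (Fin r))).Pairwise (Function.onFun IsCoprime g) :=
    fun S _ T _ hST => hgcop S T hST
  have hdvdQ : ∀ S ∈ A, g S ∣ Q := by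
    intro S _
    exact (hgdvdh S).trans ((hdvdh (Finset.subset_univ S)).trans (hQuot ▸ dvd_refl _))
  have hprodQ : (∏ S ∈ A, g S) ∣ Q := Finset.prod_dvd_of_coprime hpair hdvdQ
  obtain ⟨rest, hrest⟩ := hprodQ
  have hcardA : A.card = 2 ^ r - 1 := by
    have hA' : A = Finset.univ.erase ∅ := by
      ext S
      rw [hmemA, Finset.mem_erase, Finset.nonempty_iff_ne_empty]
      simp
    rw [hA', Finset.card_erase_of_mem (Finset.mem_univ _), Finset.card_univ,
      Fintype.card_finset, Fintype.card_fin]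
  have hcard' : Fintype.card {x // x ∈ A} = 2 ^ r - 1 := by
    rw [Fintype.card_coe, hcardA]
  have pos0 : 0 < 2 ^ r - 1 := by
    have h4 : 2 ^ 2 ≤ 2 ^ r := Nat.pow_le_pow_right (by omega) hr
    norm_num at h4
    omega
  let e : Fin (2 ^ r - 1) ≃ {x // x ∈ A} := (Fintype.equivFinOfCardEq hcard').symm
  refine ⟨fun i => g ((e i) : Finset (Fin r)) * (if i = ⟨0, pos0⟩ then rest else 1), ?_, ?_⟩
  · intro i hu
    exact hgnonunit _ ((hmemA _).mp (e i).2) (isUnit_of_mul_isUnit_left hu)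
  · rw [Finset.prod_mul_distrib, Finset.prod_ite_eq' Finset.univ (⟨0, pos0⟩ : Fin (2 ^ r - 1))
      (fun _ => rest), if_pos (Finset.mem_univ _)]
    rw [Equiv.prod_comp e (fun a => g (a : Finset (Fin r)))]
    rw [Finset.prod_coe_sort A g]
    exact hrest
end
end
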